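/- arXiv:1810.11378 — 4 statements merged into one kernel-verified Lean document; each statement's English description precedes it below -/
import Mathlib

section
/- Let Σ be a d×d symmetric positive definite matrix and D a d×d positive definite diagonal matrix. For any κ ≥ 1, the (κ+1)d × (κ+1)d block matrix Σ_κ with diagonal blocks all equal to Σ and off-diagonal blocks all equal to Σ − D is positive definite if and only if ((κ+1)/κ)·Σ − D is positive definite. -/
open Matrix

/-- The multi-knockoff joint covariance: a `(κ+1) × (κ+1)` block matrix whose diagonal
blocks are all `S` and whose off-diagonal blocks are all `S - D`. -/
def knockoffCov {d : ℕ} (κ : ℕ) (S D : Matrix (Fin d) (Fin d) ℝ) :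
    Matrix (Fin (κ + 1) × Fin d) (Fin (κ + 1) × Fin d) ℝ :=
  fun p q => if p.1 = q.1 then S p.2 q.2 else (S - D) p.2 q.2

lemma knockoff_quad {d : ℕ} (κ : ℕ) (S : Matrix (Fin d) (Fin d) ℝ) (s : Fin d → ℝ)
    (x : Fin (κ + 1) × Fin d → ℝ) :
    x ⬝ᵥ (knockoffCov κ S (Matrix.diagonal s)) *ᵥ x
      = (fun a => ∑ i, x (i, a)) ⬝ᵥ (S - Matrix.diagonal s) *ᵥ (fun a => ∑ i, x (i, a))
        + ∑ i, ∑ a, s a * x (i, a) ^ 2 := by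
  classical
  simp only [dotProduct, mulVec, knockoffCov, Fintype.sum_prod_type]
  have step1 : ∀ (i : Fin (κ+1)) (a : Fin d),
      (∑ j, ∑ b, (if i = j then S a b else (S - Matrix.diagonal s) a b) * x (j, b))
        = (∑ j, ∑ b, (S - Matrix.diagonal s) a b * x (j, b)) + s a * x (i, a) := by
    intro i a
    have : ∀ (j : Fin (κ+1)) (b : Fin d),
        (if i = j then S a b else (S - Matrix.diagonal s) a b) * x (j, b)
          = (S - Matrix.diagonal s) a b * x (j, b)
            + if i = j then Matrix.diagonal s a b * x (j, b) else 0 := by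
      intro j b
      by_cases h : i = j <;> simp [h, Matrix.sub_apply] <;> ring
    simp only [this, Finset.sum_add_distrib]
    congr 1
    rw [Finset.sum_comm]
    simp [Finset.sum_ite_eq', Matrix.diagonal_apply, Finset.mul_sum]
  simp only [step1, mul_add, Finset.sum_add_distrib]
  congr 1
  · rw [Finset.sum_comm]
    congr 1; funext a
    rw [← Finset.sum_mul]
    congr 1
    rw [Finset.sum_comm]
    congr 1; funext b
    rw [← Finset.mul_sum]
  · congr 1; funext i
    congr 1; funext a
    ring

/-- For `Σ` symmetric positive definite and `D` a positive definite diagonal matrix,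
the block matrix `Σ_κ` is positive definite iff `((κ+1)/κ) • Σ - D` is. -/
theorem knockoffCov_posDef_iff {d : ℕ} (κ : ℕ) (hκ : 1 ≤ κ)
    (S : Matrix (Fin d) (Fin d) ℝ) (s : Fin d → ℝ)
    (hS : S.PosDef) (hD : (Matrix.diagonal s).PosDef) :
    (knockoffCov κ S (Matrix.diagonal s)).PosDef
      ↔ ((((κ : ℝ) + 1) / κ) • S - Matrix.diagonal s).PosDef := by
  classical
  have hs : ∀ a, 0 < s a := Matrix.posDef_diagonal_iff.mp hD
  have hc : (0 : ℝ) < κ := by exact_mod_cast hκ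
  have hc1 : (0 : ℝ) < (κ : ℝ) + 1 := by linarith
  have hSsym : ∀ a b, S a b = S b a := fun a b => by
    simpa using congrFun (congrFun hS.1 b) a
  have dPD : ∀ v : Fin d → ℝ, v ⬝ᵥ Matrix.diagonal s *ᵥ v = ∑ a, s a * v a ^ 2 := by
    intro v
    simp only [dotProduct, Matrix.mulVec_diagonal]
    congr 1; funext a; ring
  have herm : ((((κ : ℝ) + 1) / κ) • S - Matrix.diagonal s).IsHermitian := by
    unfold Matrix.IsHermitian
    ext a b
    simp only [Matrix.conjTranspose_apply, Matrix.sub_apply, Matrix.smul_apply,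
      Matrix.diagonal_apply, smul_eq_mul, star_trivial]
    rw [hSsym b a]
    by_cases h : a = b <;> simp [h, eq_comm]
  have hermK : (knockoffCov κ S (Matrix.diagonal s)).IsHermitian := by
    unfold Matrix.IsHermitian
    ext p q
    simp only [Matrix.conjTranspose_apply, knockoffCov, Matrix.sub_apply,
      Matrix.diagonal_apply, star_trivial]
    rw [hSsym q.2 p.2]
    by_cases h : p.1 = q.1 <;> by_cases h2 : p.2 = q.2
    · simp [h, h2]
    · simp [h, h2, show ¬q.2 = p.2 from fun hh => h2 hh.symm]
    · simp [show ¬q.1 = p.1 from fun hh => h hh.symm, h, h2]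
    · simp [show ¬q.1 = p.1 from fun hh => h hh.symm, h,
        show ¬q.2 = p.2 from fun hh => h2 hh.symm, h2]
  constructor
  · intro h
    refine Matrix.PosDef.of_dotProduct_mulVec_pos herm (fun v hv => ?_)
    set x : Fin (κ + 1) × Fin d → ℝ := fun p => v p.2 with hxdef
    have hx : x ≠ 0 := by
      obtain ⟨a, ha⟩ := Function.ne_iff.mp hv
      exact Function.ne_iff.mpr ⟨(0, a), ha⟩
    have hQ := h.dotProduct_mulVec_pos hx
    rw [star_trivial, knockoff_quad] at hQ
    have hy : (fun a => ∑ i : Fin (κ + 1), x (i, a)) = ((κ : ℝ) + 1) • v := by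
      funext a
      simp [hxdef, Finset.sum_const, nsmul_eq_mul]
    rw [hy] at hQ
    have e1 : (((κ : ℝ) + 1) • v) ⬝ᵥ (S - Matrix.diagonal s) *ᵥ (((κ : ℝ) + 1) • v)
        = ((κ : ℝ) + 1) ^ 2 * (v ⬝ᵥ S *ᵥ v - ∑ a, s a * v a ^ 2) := by
      simp only [smul_dotProduct, Matrix.mulVec_smul, dotProduct_smul, smul_eq_mul,
        Matrix.sub_mulVec, dotProduct_sub, dPD v]
      ring
    have e2 : (∑ i : Fin (κ + 1), ∑ a, s a * x (i, a) ^ 2)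
        = ((κ : ℝ) + 1) * ∑ a, s a * v a ^ 2 := by
      simp [hxdef, Finset.sum_const, nsmul_eq_mul]
    rw [e1, e2] at hQ
    rw [star_trivial]
    have goalEq : v ⬝ᵥ ((((κ : ℝ) + 1) / κ) • S - Matrix.diagonal s) *ᵥ v
        = (((κ : ℝ) + 1) / κ) * (v ⬝ᵥ S *ᵥ v) - ∑ a, s a * v a ^ 2 := by
      simp only [Matrix.sub_mulVec, dotProduct_sub, Matrix.smul_mulVec,
        dotProduct_smul, smul_eq_mul, dPD v]
    rw [goalEq, div_mul_eq_mul_div, sub_pos, lt_div_iff₀ hc]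
    nlinarith [hQ, hc1]
  · intro h
    refine Matrix.PosDef.of_dotProduct_mulVec_pos hermK (fun x hx => ?_)
    rw [star_trivial, knockoff_quad]
    set y : Fin d → ℝ := fun a => ∑ i : Fin (κ + 1), x (i, a) with hydef
    set T : ℝ := ∑ i : Fin (κ + 1), ∑ a, s a * x (i, a) ^ 2 with hTdef
    have hT0 : 0 ≤ T := by
      apply Finset.sum_nonneg; intro i _
      exact Finset.sum_nonneg fun a _ => mul_nonneg (hs a).le (sq_nonneg _)
    have hCS : (∑ a, s a * y a ^ 2) ≤ ((κ : ℝ) + 1) * T := by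
      rw [hTdef, Finset.sum_comm, Finset.mul_sum]
      apply Finset.sum_le_sum
      intro a _
      rw [← Finset.mul_sum, ← mul_assoc, mul_comm ((κ : ℝ) + 1) (s a), mul_assoc]
      apply mul_le_mul_of_nonneg_left _ (hs a).le
      have := sq_sum_le_card_mul_sum_sq (s := (Finset.univ : Finset (Fin (κ + 1))))
        (f := fun i => x (i, a))
      simpa [hydef] using this
    have key : y ⬝ᵥ (S - Matrix.diagonal s) *ᵥ y
        = ((κ : ℝ) / (κ + 1)) * (y ⬝ᵥ ((((κ : ℝ) + 1) / κ) • S - Matrix.diagonal s) *ᵥ y)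
          - (1 / ((κ : ℝ) + 1)) * (∑ a, s a * y a ^ 2) := by
      simp only [Matrix.sub_mulVec, dotProduct_sub, Matrix.smul_mulVec,
        dotProduct_smul, smul_eq_mul, dPD y]
      field_simp
      ring
    rw [key]
    by_cases hy : y = 0
    · have hQb0 : y ⬝ᵥ ((((κ : ℝ) + 1) / κ) • S - Matrix.diagonal s) *ᵥ y = 0 := by
        simp [hy]
      have hyd0 : (∑ a, s a * y a ^ 2) = 0 := by simp [hy]
      rw [hQb0, hyd0]
      simp only [mul_zero, sub_zero, zero_add, zero_sub, neg_zero]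
      obtain ⟨p, hp⟩ := Function.ne_iff.mp hx
      rw [hTdef]
      have hpa : (0 : ℝ) < ∑ a, s a * x (p.1, a) ^ 2 := by
        refine Finset.sum_pos' (fun a _ => mul_nonneg (hs a).le (sq_nonneg _))
          ⟨p.2, Finset.mem_univ _, mul_pos (hs p.2) (pow_two_pos_of_ne_zero ?_)⟩
        simpa using hp
      refine Finset.sum_pos'
        (fun i _ => Finset.sum_nonneg fun a _ => mul_nonneg (hs a).le (sq_nonneg _))
        ⟨p.1, Finset.mem_univ _, hpa⟩
    · have hQb : 0 < y ⬝ᵥ ((((κ : ℝ) + 1) / κ) • S - Matrix.diagonal s) *ᵥ y := by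
        have := h.dotProduct_mulVec_pos hy
        rwa [star_trivial] at this
      have h1 : 0 < ((κ : ℝ) / (κ + 1)) *
          (y ⬝ᵥ ((((κ : ℝ) + 1) / κ) • S - Matrix.diagonal s) *ᵥ y) :=
        mul_pos (div_pos hc hc1) hQb
      have h2 : (1 / ((κ : ℝ) + 1)) * (∑ a, s a * y a ^ 2) ≤ T := by
        rw [div_mul_eq_mul_div, one_mul, div_le_iff₀ hc1]
        linarith [hCS]
      linarith
end

section
/- Let X = (X^0, X^1, …, X^κ) be a jointly Gaussian random vector in ℝ^{d(κ+1)} where each X^k ∈ ℝ^d has the same mean μ and the covariance matrix is Σ_κ (all diagonal blocks Σ, all off-diagonal blocks Σ − D with D diagonal). Then for any collection σ = (σ_1,…,σ_d) of permutations of {0,1,…,κ}, the swapped vector [X^0,…,X^κ]_{swap(σ)} has the same distribution as [X^0,…,X^κ]. -/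
open MeasureTheory ProbabilityTheory Real Complex
open scoped FourierTransform RealInnerProductSpace Manifold

noncomputable section

namespace GaussianSwapAux

variable {ι : Type*} [Fintype ι]

/-- The characteristic function of a measure on a Euclidean space. -/
def cf (ρ : Measure (EuclideanSpace ℝ ι)) (w : EuclideanSpace ℝ ι) : ℂ :=
  ∫ v, Complex.exp ((2 * π * ⟪v, w⟫ : ℝ) * Complex.I) ∂ρ

lemma integral_schwartz_eq_cf (ρ : Measure (EuclideanSpace ℝ ι)) [IsProbabilityMeasure ρ]
    (g : SchwartzMap (EuclideanSpace ℝ ι) ℂ) :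
    ∫ v, g v ∂ρ = ∫ w, cf ρ w * (SchwartzMap.fourierTransformCLM ℂ g) w := by
  set G : SchwartzMap (EuclideanSpace ℝ ι) ℂ := SchwartzMap.fourierTransformCLM ℂ g with hGdef
  have hFg : 𝓕 ⇑g = ⇑G := rfl
  have hGint : Integrable (𝓕 ⇑g) volume := by rw [hFg]; exact G.integrable
  have hinv : ∀ v, g v = ∫ w, Complex.exp ((2 * π * ⟪w, v⟫ : ℝ) * Complex.I) * G w := by
    intro v
    conv_lhs => rw [← Continuous.fourierInv_fourier_eq g.continuous g.integrable hGint]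
    rw [Real.fourierInv_eq']
    simp only [hFg, smul_eq_mul]
  have hcont : Continuous (fun p : EuclideanSpace ℝ ι × EuclideanSpace ℝ ι =>
      Complex.exp ((2 * π * ⟪p.2, p.1⟫ : ℝ) * Complex.I) * G p.2) := by
    have h1 : Continuous (fun p : EuclideanSpace ℝ ι × EuclideanSpace ℝ ι => ⟪p.2, p.1⟫) :=
      continuous_snd.inner continuous_fst
    exact (Complex.continuous_exp.comp
      (((Complex.continuous_ofReal.comp (continuous_const.mul h1))).mul continuous_const)).mul
      (G.continuous.comp continuous_snd)
  have hint : Integrable (fun p : EuclideanSpace ℝ ι × EuclideanSpace ℝ ι =>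
      Complex.exp ((2 * π * ⟪p.2, p.1⟫ : ℝ) * Complex.I) * G p.2) (ρ.prod volume) := by
    rw [integrable_prod_iff hcont.aestronglyMeasurable]
    constructor
    · refine Filter.Eventually.of_forall fun v => ?_
      refine G.integrable.bdd_mul (c := 1) ?_ (Filter.Eventually.of_forall fun w => by rw [Complex.norm_exp_ofReal_mul_I])
      exact (Complex.continuous_exp.comp ((Complex.continuous_ofReal.comp
        (continuous_const.mul (continuous_id.inner continuous_const))).mul
        continuous_const)).aestronglyMeasurable
    · refine (integrable_const (∫ w, ‖G w‖)).congr
        (Filter.Eventually.of_forall fun v => ?_)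
      refine (integral_congr_ae (Filter.Eventually.of_forall fun w => ?_))
      show ‖G w‖ = ‖Complex.exp ((2 * π * ⟪w, v⟫ : ℝ) * Complex.I) * G w‖
      rw [norm_mul, Complex.norm_exp_ofReal_mul_I, one_mul]
  calc ∫ v, g v ∂ρ
      = ∫ v, ∫ w, Complex.exp ((2 * π * ⟪w, v⟫ : ℝ) * Complex.I) * G w ∂volume ∂ρ := by
        exact integral_congr_ae (Filter.Eventually.of_forall fun v => hinv v)
    _ = ∫ w, ∫ v, Complex.exp ((2 * π * ⟪w, v⟫ : ℝ) * Complex.I) * G w ∂ρ ∂volume :=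
        integral_integral_swap hint
    _ = ∫ w, (∫ v, Complex.exp ((2 * π * ⟪v, w⟫ : ℝ) * Complex.I) ∂ρ) * G w := by
        refine integral_congr_ae (Filter.Eventually.of_forall fun w => ?_)
        beta_reduce
        rw [← integral_mul_const]
        exact integral_congr_ae (Filter.Eventually.of_forall fun v => by
          simp only [real_inner_comm w])
    _ = _ := rfl

lemma integral_smooth_eq (μ ν : Measure (EuclideanSpace ℝ ι))
    [IsProbabilityMeasure μ] [IsProbabilityMeasure ν]
    (hφ : ∀ w, cf μ w = cf ν w) {f : EuclideanSpace ℝ ι → ℝ}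
    (hf : ContDiff ℝ ((⊤ : ℕ∞)) f) (hsupp : HasCompactSupport f) :
    ∫ v, f v ∂μ = ∫ v, f v ∂ν := by
  have hdecay : ∀ (k n : ℕ), ∃ C, ∀ x,
      ‖x‖ ^ k * ‖iteratedFDeriv ℝ n (fun x => (f x : ℂ)) x‖ ≤ C := by
    intro k n
    have heq : (fun x => (f x : ℂ)) = ⇑(RCLike.ofRealLI (K := ℂ)) ∘ f := by
      ext x; simp [RCLike.ofRealLI_apply]
    have hcont0 : Continuous fun x : EuclideanSpace ℝ ι =>
        ‖x‖ ^ k * ‖iteratedFDeriv ℝ n f x‖ :=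
      (continuous_norm.pow k).mul
        ((hf.continuous_iteratedFDeriv (by exact_mod_cast le_top)).norm)
    obtain ⟨C, hC⟩ :=
      hcont0.bounded_above_of_compact_support (((hsupp.iteratedFDeriv n).norm).mul_left)
    refine ⟨C, fun x => ?_⟩
    rw [heq, LinearIsometry.norm_iteratedFDeriv_comp_left _ hf.contDiffAt (by exact_mod_cast le_top)]
    have := hC x
    rwa [Real.norm_eq_abs, _root_.abs_of_nonneg (by positivity)] at this
  set g : SchwartzMap (EuclideanSpace ℝ ι) ℂ :=
    { toFun := fun x => (f x : ℂ)
      smooth' := Complex.ofRealCLM.contDiff.comp hf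
      decay' := hdecay } with hgdef
  have h1 : ∫ v, g v ∂μ = ∫ v, g v ∂ν := by
    rw [integral_schwartz_eq_cf μ g, integral_schwartz_eq_cf ν g]
    refine integral_congr_ae (Filter.Eventually.of_forall fun w => ?_)
    simp only [hφ w]
  have h2 : ∀ ρ : Measure (EuclideanSpace ℝ ι), ∫ v, g v ∂ρ = ((∫ v, f v ∂ρ : ℝ) : ℂ) := by
    intro ρ
    show ∫ v, ((f v : ℝ) : ℂ) ∂ρ = _
    exact integral_ofReal
  rw [h2 μ, h2 ν] at h1
  exact_mod_cast h1

lemma measure_compact_le (μ ν : Measure (EuclideanSpace ℝ ι))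
    [IsProbabilityMeasure μ] [IsProbabilityMeasure ν]
    (hφ : ∀ w, cf μ w = cf ν w) {K : Set (EuclideanSpace ℝ ι)} (hK : IsCompact K) :
    μ K ≤ ν K := by
  have key : ∀ δ : ℝ, 0 < δ → μ K ≤ ν (Metric.cthickening δ K) := by
    intro δ hδ
    obtain ⟨f, hf0, hf1, hf01⟩ :=
      exists_contMDiffMap_zero_one_of_isClosed (n := (⊤ : ℕ∞)) (𝓘(ℝ, EuclideanSpace ℝ ι))
        (Metric.isOpen_thickening (δ := δ) (E := K)).isClosed_compl hK.isClosed
        (Set.disjoint_left.mpr fun {x} hxs hxK => hxs (Metric.self_subset_thickening hδ K hxK))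
    have hfsmooth : ContDiff ℝ ((⊤ : ℕ∞)) ⇑f := contMDiff_iff_contDiff.mp f.contMDiff
    have hzero : ∀ x, x ∉ Metric.cthickening δ K → f x = 0 := by
      intro x hx
      exact hf0 fun hthick => hx (Metric.thickening_subset_cthickening δ K hthick)
    have hfsupp : HasCompactSupport ⇑f :=
      HasCompactSupport.intro hK.cthickening hzero
    have hintμ : Integrable ⇑f μ :=
      hfsmooth.continuous.integrable_of_hasCompactSupport hfsupp
    have hintν : Integrable ⇑f ν :=
      hfsmooth.continuous.integrable_of_hasCompactSupport hfsupp
    have hμle : (μ K).toReal ≤ ∫ v, f v ∂μ := by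
      rw [← measureReal_def, ← integral_indicator_one hK.measurableSet]
      refine integral_mono ((integrable_const 1).indicator hK.measurableSet) hintμ fun x => ?_
      by_cases hx : x ∈ K
      · simp [Set.indicator_of_mem hx, hf1 hx]
      · simp only [Set.indicator_of_notMem hx]
        exact (hf01 x).1
    have hνle : ∫ v, f v ∂ν ≤ (ν (Metric.cthickening δ K)).toReal := by
      rw [← measureReal_def, ← integral_indicator_one Metric.isClosed_cthickening.measurableSet]
      refine integral_mono hintν
        ((integrable_const 1).indicator Metric.isClosed_cthickening.measurableSet)
        fun x => ?_
      by_cases hx : x ∈ Metric.cthickening δ K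
      · simp only [Set.indicator_of_mem hx, Pi.one_apply]
        exact (hf01 x).2
      · simp [Set.indicator_of_notMem hx, hzero x hx]
    have heqint := integral_smooth_eq μ ν hφ hfsmooth hfsupp
    have hto : (μ K).toReal ≤ (ν (Metric.cthickening δ K)).toReal := by
      calc (μ K).toReal ≤ ∫ v, f v ∂μ := hμle
        _ = ∫ v, f v ∂ν := heqint
        _ ≤ _ := hνle
    exact (ENNReal.toReal_le_toReal (measure_ne_top μ K) (measure_ne_top ν _)).mp hto
  have hten : Filter.Tendsto (fun δ => ν (Metric.cthickening δ K)) (nhdsWithin 0 (Set.Ioi 0))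
      (nhds (ν K)) :=
    (tendsto_measure_cthickening_of_isClosed ⟨1, one_pos, measure_ne_top ν _⟩
      hK.isClosed).mono_left nhdsWithin_le_nhds
  exact ge_of_tendsto hten (eventually_mem_nhdsWithin.mono fun δ hδ => key δ hδ)

lemma cramer_wold (μ ν : Measure (EuclideanSpace ℝ ι))
    [IsProbabilityMeasure μ] [IsProbabilityMeasure ν]
    (hφ : ∀ w, cf μ w = cf ν w) : μ = ν := by
  have hφ' : ∀ w, cf ν w = cf μ w := fun w => (hφ w).symm
  have hcompact : ∀ K : Set (EuclideanSpace ℝ ι), IsCompact K → μ K = ν K := fun K hK =>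
    le_antisymm (measure_compact_le μ ν hφ hK) (measure_compact_le ν μ hφ' hK)
  have hclosed : ∀ C : Set (EuclideanSpace ℝ ι), IsClosed C → μ C = ν C := by
    intro C hC
    have hcover : (⋃ n : ℕ, C ∩ Metric.closedBall 0 n) = C := by
      apply Set.Subset.antisymm
      · exact Set.iUnion_subset fun n => Set.inter_subset_left
      · intro x hx
        obtain ⟨n, hn⟩ := exists_nat_ge (dist x 0)
        exact Set.mem_iUnion.mpr ⟨n, hx, Metric.mem_closedBall.mpr hn⟩
    have hmono : Monotone (fun n : ℕ => C ∩ Metric.closedBall (0 : EuclideanSpace ℝ ι) n) := by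
      intro a b hab
      exact Set.inter_subset_inter_right _
        (Metric.closedBall_subset_closedBall (by exact_mod_cast hab))
    have h1 : Filter.Tendsto (fun n : ℕ => μ (C ∩ Metric.closedBall 0 n)) Filter.atTop
        (nhds (μ (⋃ n : ℕ, C ∩ Metric.closedBall 0 n))) := tendsto_measure_iUnion_atTop hmono
    have h2 : Filter.Tendsto (fun n : ℕ => ν (C ∩ Metric.closedBall 0 n)) Filter.atTop
        (nhds (ν (⋃ n : ℕ, C ∩ Metric.closedBall 0 n))) := tendsto_measure_iUnion_atTop hmono
    rw [hcover] at h1 h2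
    have heq : (fun n : ℕ => μ (C ∩ Metric.closedBall 0 n)) =
        fun n : ℕ => ν (C ∩ Metric.closedBall 0 n) := by
      funext n
      exact hcompact _ ((isCompact_closedBall 0 n).inter_left hC)
    rw [heq] at h1
    exact tendsto_nhds_unique h1 h2
  refine ext_of_generate_finite {s | IsClosed s} ?_ ?_ (fun s hs => hclosed s hs) ?_
  · exact BorelSpace.measurable_eq.trans borel_eq_generateFrom_isClosed
  · exact fun s hs t ht _ => hs.inter ht
  · exact hclosed _ isClosed_univ

end GaussianSwapAux

end

open MeasureTheory ProbabilityTheory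

/-- A Gaussian vector `(X⁰, …, X^κ)` with all block means equal to `m` and covariance `Σ_κ`
(diagonal blocks `Σ`, off-diagonal blocks `Σ - D`, `D` diagonal) is invariant in
distribution under any coordinatewise swap `σ = (σ₁, …, σ_d)` of the `κ+1` copies.
Joint Gaussianity is expressed by requiring every linear functional to have a Gaussian
distribution with the mean and variance induced by `m` and `Σ_κ`. -/
theorem gaussian_multiknockoff_exchangeable
    {d : ℕ} (κ : ℕ) (S : Matrix (Fin d) (Fin d) ℝ) (s : Fin d → ℝ) (m : Fin d → ℝ)
    (μ : Measure (Fin (κ + 1) → Fin d → ℝ)) [IsProbabilityMeasure μ]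
    (hGauss : ∀ a : Fin (κ + 1) → Fin d → ℝ,
      Measure.map (fun x => ∑ k, ∑ i, a k i * x k i) μ
        = gaussianReal (∑ k, ∑ i, a k i * m i)
            (Real.toNNReal (∑ k, ∑ i, ∑ l, ∑ j,
              a k i * knockoffCov κ S (Matrix.diagonal s) (k, i) (l, j) * a l j))) :
    ∀ σ : Fin d → Equiv.Perm (Fin (κ + 1)),
      Measure.map (fun x : Fin (κ + 1) → Fin d → ℝ => fun k i => x (σ i k) i) μ = μ := by
  intro σ
  classical
  set E := (Fin (κ + 1) → Fin d → ℝ)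
  set T : E → E := fun x => fun k i => x (σ i k) i with hTdef
  have hT : Measurable T :=
    measurable_pi_lambda _ fun k => measurable_pi_lambda _ fun i =>
      (measurable_pi_apply i).comp (measurable_pi_apply (σ i k))
  have hSa : ∀ a : Fin (κ + 1) → Fin d → ℝ,
      Measurable (fun x : E => ∑ k, ∑ i, a k i * x k i) := by
    intro a
    refine Finset.measurable_sum _ fun k _ => Finset.measurable_sum _ fun i _ => ?_
    exact measurable_const.mul ((measurable_pi_apply i).comp (measurable_pi_apply k))
  -- swap of a linear functional
  have hswap_fun : ∀ (a : Fin (κ + 1) → Fin d → ℝ) (x : E),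
      ∑ k, ∑ i, a k i * x (σ i k) i = ∑ k, ∑ i, a ((σ i).symm k) i * x k i := by
    intro a x
    calc ∑ k, ∑ i, a k i * x (σ i k) i
        = ∑ i, ∑ k, a k i * x (σ i k) i := Finset.sum_comm
      _ = ∑ i, ∑ k, a ((σ i).symm k) i * x k i :=
          Finset.sum_congr rfl fun i _ =>
            Fintype.sum_equiv (σ i) _ _ (fun k => by simp)
      _ = ∑ k, ∑ i, a ((σ i).symm k) i * x k i := Finset.sum_comm
  -- mean invariance
  have hmean : ∀ a : Fin (κ + 1) → Fin d → ℝ,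
      ∑ k, ∑ i, a ((σ i).symm k) i * m i = ∑ k, ∑ i, a k i * m i :=
    fun a => (hswap_fun a (fun k i => m i)).symm
  -- the pair equivalence
  set Φ : (Fin (κ + 1) × Fin d) ≃ (Fin (κ + 1) × Fin d) :=
    { toFun := fun p => (σ p.2 p.1, p.2)
      invFun := fun p => ((σ p.2).symm p.1, p.2)
      left_inv := fun p => by simp
      right_inv := fun p => by simp } with hΦdef
  -- covariance invariance
  have cov_swap : ∀ (k l : Fin (κ + 1)) (i j : Fin d),
      knockoffCov κ S (Matrix.diagonal s) (σ i k, i) (σ j l, j)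
        = knockoffCov κ S (Matrix.diagonal s) (k, i) (l, j) := by
    intro k l i j
    by_cases hij : i = j
    · subst hij
      simp [knockoffCov, Equiv.apply_eq_iff_eq]
    · have h0 : (S - Matrix.diagonal s) i j = S i j := by
        simp [Matrix.sub_apply, Matrix.diagonal_apply_ne _ hij]
      by_cases h1 : σ i k = σ j l <;> by_cases h2 : k = l <;>
        simp [knockoffCov, h1, h2, h0]
  -- rewriting quadruple sums as pair sums
  have pair : ∀ F : Fin (κ + 1) → Fin d → Fin (κ + 1) → Fin d → ℝ,
      (∑ p : Fin (κ + 1) × Fin d, ∑ q : Fin (κ + 1) × Fin d, F p.1 p.2 q.1 q.2)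
        = ∑ k, ∑ i, ∑ l, ∑ j, F k i l j := by
    intro F
    rw [Fintype.sum_prod_type]
    refine Finset.sum_congr rfl fun k _ => ?_
    refine Finset.sum_congr rfl fun i _ => ?_
    rw [Fintype.sum_prod_type]
  -- variance invariance
  have hvar : ∀ a : Fin (κ + 1) → Fin d → ℝ,
      (∑ k, ∑ i, ∑ l, ∑ j, a ((σ i).symm k) i
          * knockoffCov κ S (Matrix.diagonal s) (k, i) (l, j) * a ((σ j).symm l) j)
        = ∑ k, ∑ i, ∑ l, ∑ j, a k i
          * knockoffCov κ S (Matrix.diagonal s) (k, i) (l, j) * a l j := by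
    intro a
    rw [← pair (fun k i l j => a ((σ i).symm k) i
      * knockoffCov κ S (Matrix.diagonal s) (k, i) (l, j) * a ((σ j).symm l) j),
      ← pair (fun k i l j => a k i
      * knockoffCov κ S (Matrix.diagonal s) (k, i) (l, j) * a l j)]
    refine (Fintype.sum_equiv Φ _ _ fun p => ?_).symm
    refine Fintype.sum_equiv Φ _ _ fun q => ?_
    have h1 : (Φ p) = (σ p.2 p.1, p.2) := rfl
    have h2 : (Φ q) = (σ q.2 q.1, q.2) := rfl
    have h3 : ((σ (Φ p).2).symm (Φ p).1, (Φ p).2) = p := Φ.left_inv p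
    simp only [h1, h2]
    simp only [Equiv.symm_apply_apply]
    rw [cov_swap p.1 q.1 p.2 q.2]
  -- the swapped measure satisfies the same Gaussian property
  have hGaussT : ∀ a : Fin (κ + 1) → Fin d → ℝ,
      Measure.map (fun x => ∑ k, ∑ i, a k i * x k i) (Measure.map T μ)
        = gaussianReal (∑ k, ∑ i, a k i * m i)
            (Real.toNNReal (∑ k, ∑ i, ∑ l, ∑ j,
              a k i * knockoffCov κ S (Matrix.diagonal s) (k, i) (l, j) * a l j)) := by
    intro a
    rw [Measure.map_map (hSa a) hT]
    have hcomp : ((fun x : E => ∑ k, ∑ i, a k i * x k i) ∘ T)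
        = fun x : E => ∑ k, ∑ i, a ((σ i).symm k) i * x k i :=
      funext fun x => hswap_fun a x
    rw [hcomp]
    have h0 := hGauss (fun k i => a ((σ i).symm k) i)
    rw [hmean a, hvar a] at h0
    exact h0
  -- move to Euclidean space and compare characteristic functions
  set toPi : E ≃ᵐ ((Fin (κ + 1) × Fin d) → ℝ) :=
    { toEquiv :=
        { toFun := fun x p => x p.1 p.2
          invFun := fun v k i => v (k, i)
          left_inv := fun x => rfl
          right_inv := fun v => funext fun p => by cases p; rfl }
      measurable_toFun := measurable_pi_lambda _ fun p =>
        (measurable_pi_apply p.2).comp (measurable_pi_apply p.1)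
      measurable_invFun := measurable_pi_lambda _ fun k => measurable_pi_lambda _ fun i =>
        measurable_pi_apply (k, i) } with htoPi
  set e : E ≃ᵐ EuclideanSpace ℝ (Fin (κ + 1) × Fin d) := toPi.trans (MeasurableEquiv.toLp 2 ((Fin (κ + 1) × Fin d) → ℝ)) with he
  have hecoord : ∀ (x : E) (p : Fin (κ + 1) × Fin d), (e x) p = x p.1 p.2 := fun x p => rfl
  have hν : IsProbabilityMeasure (Measure.map T μ) :=
    Measure.isProbabilityMeasure_map hT.aemeasurable
  have hcf : ∀ (ρ : Measure E), IsProbabilityMeasure ρ →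
      (∀ a : Fin (κ + 1) → Fin d → ℝ,
        Measure.map (fun x => ∑ k, ∑ i, a k i * x k i) ρ
          = gaussianReal (∑ k, ∑ i, a k i * m i)
              (Real.toNNReal (∑ k, ∑ i, ∑ l, ∑ j,
                a k i * knockoffCov κ S (Matrix.diagonal s) (k, i) (l, j) * a l j))) →
      ∀ w : EuclideanSpace ℝ (Fin (κ + 1) × Fin d), GaussianSwapAux.cf (Measure.map e ρ) w
        = ∫ t : ℝ, Complex.exp ((t : ℂ) * Complex.I)
            ∂(gaussianReal
                (∑ k, ∑ i, (2 * Real.pi * w (k, i)) * m i)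
                (Real.toNNReal (∑ k, ∑ i, ∑ l, ∑ j,
                  (2 * Real.pi * w (k, i))
                    * knockoffCov κ S (Matrix.diagonal s) (k, i) (l, j)
                    * (2 * Real.pi * w (l, j))))) := by
    intro ρ hρprob hρ w
    set a : Fin (κ + 1) → Fin d → ℝ := fun k i => 2 * Real.pi * w (k, i) with ha
    have hsum : ∀ x : E, 2 * Real.pi * ⟪e x, w⟫ = ∑ k, ∑ i, a k i * x k i := by
      intro x
      have hinner : ⟪e x, w⟫ = ∑ p : Fin (κ + 1) × Fin d, x p.1 p.2 * w p := by
        rw [PiLp.inner_apply]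
        exact Finset.sum_congr rfl fun p _ => by rw [RCLike.inner_apply, conj_trivial, hecoord, mul_comm]
      rw [hinner, Finset.mul_sum, Fintype.sum_prod_type]
      refine Finset.sum_congr rfl fun k _ => ?_
      refine Finset.sum_congr rfl fun i _ => ?_
      ring
    have hc1 : Continuous fun v : EuclideanSpace ℝ (Fin (κ + 1) × Fin d) =>
        Complex.exp ((2 * Real.pi * ⟪v, w⟫ : ℝ) * Complex.I) :=
      Complex.continuous_exp.comp ((Complex.continuous_ofReal.comp
        (continuous_const.mul (continuous_id.inner continuous_const))).mul continuous_const)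
    have hc2 : Continuous fun t : ℝ => Complex.exp ((t : ℂ) * Complex.I) :=
      Complex.continuous_exp.comp (Complex.continuous_ofReal.mul continuous_const)
    calc GaussianSwapAux.cf (Measure.map e ρ) w
        = ∫ x, Complex.exp ((2 * Real.pi * ⟪e x, w⟫ : ℝ) * Complex.I) ∂ρ :=
          integral_map e.measurable.aemeasurable hc1.aestronglyMeasurable
      _ = ∫ x, Complex.exp ((((∑ k, ∑ i, a k i * x k i : ℝ)) : ℂ) * Complex.I) ∂ρ := by
          refine integral_congr_ae (Filter.Eventually.of_forall fun x => ?_)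
          beta_reduce
          rw [hsum x]
      _ = ∫ t : ℝ, Complex.exp ((t : ℂ) * Complex.I)
            ∂(Measure.map (fun x => ∑ k, ∑ i, a k i * x k i) ρ) :=
          (integral_map (hSa a).aemeasurable hc2.aestronglyMeasurable).symm
      _ = _ := by rw [hρ a]
  have hcfeq : ∀ w, GaussianSwapAux.cf (Measure.map e (Measure.map T μ)) w
      = GaussianSwapAux.cf (Measure.map e μ) w := by
    intro w
    rw [hcf (Measure.map T μ) hν hGaussT w, hcf μ inferInstance hGauss w]
  have hprob1 : IsProbabilityMeasure (Measure.map e (Measure.map T μ)) :=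
    Measure.isProbabilityMeasure_map e.measurable.aemeasurable
  have hprob2 : IsProbabilityMeasure (Measure.map e μ) :=
    Measure.isProbabilityMeasure_map e.measurable.aemeasurable
  have hmapeq : Measure.map e (Measure.map T μ) = Measure.map e μ :=
    GaussianSwapAux.cramer_wold _ _ hcfeq
  have hfinal := congrArg (Measure.map ⇑e.symm) hmapeq
  rw [Measure.map_map e.symm.measurable e.measurable,
      Measure.map_map e.symm.measurable e.measurable,
      MeasurableEquiv.symm_comp_self, Measure.map_id, Measure.map_id] at hfinal
  exact hfinal
end

section
/- Selective SeqStep+ FDR control: let p_1,…,p_d ∈ [0,1] be such that the null p-values (p_i)_{i∈H_0} are i.i.d., independent of the non-nulls, and satisfy P(p_i ≤ t) ≤ t for all t. Fix c ∈ (0,1) and q ∈ (0,1), define k̂ = max{k : (1 + #{i ≤ k : p_i > c}) / (#{i ≤ k : p_i ≤ c} ∨ 1) ≤ ((1−c)/c)·q}, and select S = {i ≤ k̂ : p_i ≤ c}. Then E[ |S ∩ H_0| / (|S| ∨ 1) ] ≤ q. -/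
open MeasureTheory ProbabilityTheory

/-- The Selective SeqStep+ stopping index
`k̂ = max {k ≤ d : (1 + #{i ≤ k : pᵢ > c}) / (#{i ≤ k : pᵢ ≤ c} ∨ 1) ≤ ((1-c)/c) q}`,
with `max ∅ = 0`. -/
noncomputable def seqStepK {d : ℕ} (c q : ℝ) (p : Fin d → ℝ) : ℕ :=
  sSup {k : ℕ | k ≤ d ∧
    (1 + ({i : Fin d | (i : ℕ) < k ∧ c < p i}.ncard : ℝ))
      / max ({i : Fin d | (i : ℕ) < k ∧ p i ≤ c}.ncard : ℝ) 1 ≤ ((1 - c) / c) * q}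

/-- The Selective SeqStep+ selection set `S = {i ≤ k̂ : pᵢ ≤ c}`. -/
noncomputable def seqStepSel {d : ℕ} (c q : ℝ) (p : Fin d → ℝ) : Set (Fin d) :=
  {i : Fin d | (i : ℕ) < seqStepK c q p ∧ p i ≤ c}

namespace SeqStepAux

open Finset
open scoped Classical

variable {d : ℕ}

/-- number of indices `< k` not in `B` -/
noncomputable def na (k : ℕ) (B : Finset (Fin d)) : ℕ :=
  (univ.filter (fun i : Fin d => (i : ℕ) < k ∧ i ∉ B)).card

/-- number of indices `< k` in `B` -/
noncomputable def nb (k : ℕ) (B : Finset (Fin d)) : ℕ :=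
  (B.filter (fun i : Fin d => (i : ℕ) < k)).card

noncomputable def KSet (c q : ℝ) (B : Finset (Fin d)) : Set ℕ :=
  {k : ℕ | k ≤ d ∧ (1 + (na k B : ℝ)) / max (nb k B : ℝ) 1 ≤ ((1 - c) / c) * q}

noncomputable def Khat (c q : ℝ) (B : Finset (Fin d)) : ℕ := sSup (KSet c q B)

noncomputable def selB (c q : ℝ) (B : Finset (Fin d)) : Finset (Fin d) :=
  B.filter (fun i : Fin d => (i : ℕ) < Khat c q B)

noncomputable def fdpB (c q : ℝ) (H0 B : Finset (Fin d)) : ℝ :=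
  ((selB c q B ∩ H0).card : ℝ) / max ((selB c q B).card : ℝ) 1

/-- the (super)martingale statistic `V⁺(k)/(1+V⁻(k))` -/
noncomputable def Mstat (H0 B : Finset (Fin d)) (k : ℕ) : ℝ :=
  (((B ∩ H0).filter (fun i : Fin d => (i : ℕ) < k)).card : ℝ)
    / (1 + (((H0 \ B).filter (fun i : Fin d => (i : ℕ) < k)).card : ℝ))

lemma KSet_bddAbove (c q : ℝ) (B : Finset (Fin d)) : BddAbove (KSet c q B) :=
  ⟨d, fun _ hk => hk.1⟩

lemma Khat_le (c q : ℝ) (B : Finset (Fin d)) : Khat c q B ≤ d := by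
  rcases Set.eq_empty_or_nonempty (KSet c q B) with h | h
  · simp [Khat, h, csSup_empty]
  · exact csSup_le h (fun _ hk => hk.1)

lemma Khat_mem (c q : ℝ) (B : Finset (Fin d)) (h : (KSet c q B).Nonempty) :
    Khat c q B ∈ KSet c q B := Nat.sSup_mem h (KSet_bddAbove c q B)

lemma le_Khat_iff (c q : ℝ) (B : Finset (Fin d)) (k : ℕ) (hk : k ≠ 0) :
    k ≤ Khat c q B ↔ ∃ j ∈ KSet c q B, k ≤ j := by
  constructor
  · intro h
    have hne : (KSet c q B).Nonempty := by
      by_contra hemp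
      rw [Set.not_nonempty_iff_eq_empty] at hemp
      simp [Khat, hemp, csSup_empty] at h
      omega
    exact ⟨Khat c q B, Khat_mem c q B hne, h⟩
  · rintro ⟨j, hj, hkj⟩
    exact hkj.trans (le_csSup (KSet_bddAbove c q B) hj)

lemma Mstat_nonneg (H0 B : Finset (Fin d)) (k : ℕ) : 0 ≤ Mstat H0 B k := by
  apply div_nonneg (by positivity) (by positivity)

lemma fdpB_nonneg (c q : ℝ) (H0 B : Finset (Fin d)) : 0 ≤ fdpB c q H0 B :=
  div_nonneg (by positivity) (by positivity)

lemma fdpB_le_one (c q : ℝ) (H0 B : Finset (Fin d)) : fdpB c q H0 B ≤ 1 := by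
  rw [fdpB, div_le_one (by positivity)]
  calc ((selB c q B ∩ H0).card : ℝ) ≤ ((selB c q B).card : ℝ) := by
        exact_mod_cast Nat.cast_le.2 (card_le_card (inter_subset_left))
    _ ≤ max ((selB c q B).card : ℝ) 1 := le_max_left _ _

/-- deterministic bound : FDP ≤ ((1-c)/c)q · M(k̂) -/
lemma fdpB_le (c q : ℝ) (hc0 : 0 < c) (hc1 : c < 1) (hq0 : 0 < q) (H0 B : Finset (Fin d)) :
    fdpB c q H0 B ≤ ((1 - c) / c) * q * Mstat H0 B (Khat c q B) := by
  rcases Set.eq_empty_or_nonempty (KSet c q B) with h | h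
  · have hK : Khat c q B = 0 := by simp [Khat, h, csSup_empty]
    have : selB c q B = ∅ := by
      simp [selB, hK]
    rw [fdpB, this]
    simp only [empty_inter, card_empty, Nat.cast_zero, zero_div]
    exact mul_nonneg (mul_nonneg (div_nonneg (by linarith) hc0.le) hq0.le)
      (Mstat_nonneg H0 B _)
  · have hmem := Khat_mem c q B h
    obtain ⟨-, hineq⟩ := hmem
    set T := Khat c q B with hT
    have hsel1 : selB c q B ∩ H0 = (B ∩ H0).filter (fun i : Fin d => (i : ℕ) < T) := by
      ext i; simp [selB, mem_filter, mem_inter]; tauto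
    have hselcard : (selB c q B).card = nb T B := rfl
    have hVm : (((H0 \ B).filter (fun i : Fin d => (i : ℕ) < T)).card : ℝ) ≤ (na T B : ℝ) := by
      have : ((H0 \ B).filter (fun i : Fin d => (i : ℕ) < T))
          ⊆ (univ.filter (fun i : Fin d => (i : ℕ) < T ∧ i ∉ B)) := by
        intro i hi
        simp only [mem_filter, mem_sdiff] at hi ⊢
        exact ⟨mem_univ i, hi.2, hi.1.2⟩
      exact_mod_cast card_le_card this
    set V : ℝ := (((B ∩ H0).filter (fun i : Fin d => (i : ℕ) < T)).card : ℝ)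
    set W : ℝ := (((H0 \ B).filter (fun i : Fin d => (i : ℕ) < T)).card : ℝ)
    have hW0 : (0:ℝ) ≤ W := by positivity
    have hV0 : (0:ℝ) ≤ V := by positivity
    have h1W : (0:ℝ) < 1 + W := by linarith
    have hfdp : fdpB c q H0 B = V / max (nb T B : ℝ) 1 := by
      rw [fdpB, hsel1, hselcard]
    rw [hfdp]
    have key : V / max (nb T B : ℝ) 1 = (V / (1 + W)) * ((1 + W) / max (nb T B : ℝ) 1) := by
      field_simp
    rw [key]
    have h2 : (1 + W) / max (nb T B : ℝ) 1 ≤ ((1 - c)/c) * q := by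
      refine le_trans ?_ hineq
      have hmax : (0:ℝ) < max (nb T B : ℝ) 1 := lt_max_of_lt_right one_pos
      exact (div_le_div_iff_of_pos_right hmax).2 (by linarith)
    have hM : Mstat H0 B T = V / (1 + W) := rfl
    calc (V / (1 + W)) * ((1 + W) / max (nb T B : ℝ) 1)
        ≤ (V / (1 + W)) * (((1 - c)/c) * q) :=
          mul_le_mul_of_nonneg_left h2 (div_nonneg hV0 h1W.le)
      _ = ((1 - c)/c) * q * Mstat H0 B (Khat c q B) := by rw [hM]; ring

lemma na_eq (k : ℕ) (B : Finset (Fin d)) :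
    na k B = (univ.filter (fun i : Fin d => (i : ℕ) < k)).card - nb k B := by
  have h := card_filter_add_card_filter_not
    (s := univ.filter (fun i : Fin d => (i : ℕ) < k)) (p := fun i => i ∈ B)
  have h1 : ((univ.filter (fun i : Fin d => (i : ℕ) < k)).filter (fun i : Fin d => i ∈ B))
      = B.filter (fun i : Fin d => (i : ℕ) < k) := by
    ext i; simp [mem_filter]; tauto
  have h2 : ((univ.filter (fun i : Fin d => (i : ℕ) < k)).filter (fun i : Fin d => ¬ i ∈ B))
      = univ.filter (fun i : Fin d => (i : ℕ) < k ∧ i ∉ B) := by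
    ext i; simp [mem_filter]
  rw [h1, h2] at h
  unfold na nb
  omega

lemma nb_decomp (k j : ℕ) (hkj : k ≤ j) (B : Finset (Fin d)) :
    nb j B = nb k B + (B.filter (fun i : Fin d => ¬ (i : ℕ) < k ∧ (i:ℕ) < j)).card := by
  have h := card_filter_add_card_filter_not
    (s := B.filter (fun i : Fin d => (i : ℕ) < j)) (p := fun i => (i : ℕ) < k)
  have h1 : ((B.filter (fun i : Fin d => (i:ℕ) < j)).filter (fun i : Fin d => (i:ℕ) < k))
      = B.filter (fun i : Fin d => (i : ℕ) < k) := by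
    ext i; simp [mem_filter]; omega
  have h2 : ((B.filter (fun i : Fin d => (i:ℕ) < j)).filter (fun i : Fin d => ¬ (i:ℕ) < k))
      = B.filter (fun i : Fin d => ¬ (i : ℕ) < k ∧ (i:ℕ) < j) := by
    ext i; simp [mem_filter]; tauto
  rw [h1, h2] at h
  unfold nb
  omega

/-- the event `{Khat ≤ k}` depends only on the count of `B` below `k+1`
and on `B` above `k+1`. -/
lemma Khat_le_congr (c q : ℝ) (k : ℕ) (B B' : Finset (Fin d))
    (h1 : nb (k+1) B = nb (k+1) B')
    (h2 : B.filter (fun i : Fin d => ¬ (i : ℕ) < k+1) = B'.filter (fun i : Fin d => ¬ (i:ℕ) < k+1)) :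
    (Khat c q B ≤ k ↔ Khat c q B' ≤ k) := by
  have hnb : ∀ j, k+1 ≤ j → nb j B = nb j B' := by
    intro j hj
    rw [nb_decomp (k+1) j hj B, nb_decomp (k+1) j hj B', h1]
    congr 1
    have e1 : B.filter (fun i : Fin d => ¬ (i : ℕ) < k+1 ∧ (i:ℕ) < j)
        = (B.filter (fun i : Fin d => ¬ (i : ℕ) < k+1)).filter (fun i : Fin d => (i:ℕ) < j) := by
      ext i; simp [mem_filter]; tauto
    have e2 : B'.filter (fun i : Fin d => ¬ (i : ℕ) < k+1 ∧ (i:ℕ) < j)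
        = (B'.filter (fun i : Fin d => ¬ (i : ℕ) < k+1)).filter (fun i : Fin d => (i:ℕ) < j) := by
      ext i; simp [mem_filter]; tauto
    rw [e1, e2, h2]
  have hmem : ∀ j, k+1 ≤ j → (j ∈ KSet c q B ↔ j ∈ KSet c q B') := by
    intro j hj
    have hna : na j B = na j B' := by rw [na_eq, na_eq, hnb j hj]
    unfold KSet
    rw [Set.mem_setOf_eq, Set.mem_setOf_eq, hna, hnb j hj]
  rw [← not_iff_not]
  push_neg
  rw [Nat.lt_iff_add_one_le, Nat.lt_iff_add_one_le,
    le_Khat_iff c q B (k+1) (Nat.succ_ne_zero k), le_Khat_iff c q B' (k+1) (Nat.succ_ne_zero k)]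
  constructor
  · rintro ⟨j, hj, hkj⟩; exact ⟨j, (hmem j hkj).1 hj, hkj⟩
  · rintro ⟨j, hj, hkj⟩; exact ⟨j, (hmem j hkj).2 hj, hkj⟩

/-! ### combinatorial sum tools -/

lemma sum_powerset_card {α M : Type*} [DecidableEq α] [AddCommMonoid M]
    (s : Finset α) (f : Finset α → M) :
    ∑ A ∈ s.powerset, f A = ∑ j ∈ range (s.card + 1), ∑ A ∈ s.powersetCard j, f A := by
  rw [← sum_fiberwise_of_maps_to (g := Finset.card) (t := range (s.card + 1))
    (fun A hA => by
      rw [mem_range, Nat.lt_succ_iff]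
      exact card_le_card (mem_powerset.1 hA)) f]
  refine Finset.sum_congr rfl (fun j _ => ?_)
  refine Finset.sum_congr ?_ (fun _ _ => rfl)
  rw [powersetCard_eq_filter]

lemma sum_powerset_union_disj {α M : Type*} [DecidableEq α] [AddCommMonoid M]
    {L R : Finset α} (hLR : Disjoint L R) (f : Finset α → M) :
    ∑ A ∈ (L ∪ R).powerset, f A = ∑ A1 ∈ L.powerset, ∑ A2 ∈ R.powerset, f (A1 ∪ A2) := by
  rw [← sum_product' (s := L.powerset) (t := R.powerset)
    (f := fun A1 A2 => f (A1 ∪ A2))]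
  apply Finset.sum_nbij' (i := fun A => (A ∩ L, A ∩ R)) (j := fun z => z.1 ∪ z.2)
  · intro A hA
    rw [mem_powerset] at hA
    rw [mem_product, mem_powerset, mem_powerset]
    exact ⟨inter_subset_right, inter_subset_right⟩
  · intro z hz
    rw [mem_product, mem_powerset, mem_powerset] at hz
    rw [mem_powerset]
    exact union_subset_union hz.1 hz.2
  · intro A hA
    rw [mem_powerset] at hA
    rw [← inter_union_distrib_left]
    exact inter_eq_left.2 hA
  · intro z hz
    rw [mem_product, mem_powerset, mem_powerset] at hz
    have h1 : (z.1 ∪ z.2) ∩ L = z.1 := by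
      ext a
      simp only [mem_inter, mem_union]
      constructor
      · rintro ⟨ha | ha, haL⟩
        · exact ha
        · exact absurd haL (disjoint_right.1 hLR (hz.2 ha))
      · intro ha
        exact ⟨Or.inl ha, hz.1 ha⟩
    have h2 : (z.1 ∪ z.2) ∩ R = z.2 := by
      ext a
      simp only [mem_inter, mem_union]
      constructor
      · rintro ⟨ha | ha, haR⟩
        · exact absurd haR (disjoint_left.1 hLR (hz.1 ha))
        · exact ha
      · intro ha
        exact ⟨Or.inr ha, hz.2 ha⟩
    cases z
    simp only [Prod.mk.injEq]
    exact ⟨h1, h2⟩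
  · intro A hA
    rw [mem_powerset] at hA
    rw [← inter_union_distrib_left, inter_eq_left.2 hA]

lemma powersetCard_filter_not_mem {α : Type*} [DecidableEq α]
    (L : Finset α) (x : α) (s : ℕ) :
    (L.powersetCard s).filter (fun A => x ∉ A) = (L.erase x).powersetCard s := by
  ext A
  simp only [mem_filter, mem_powersetCard, subset_erase]
  tauto

lemma key_ineq_real (a b s0 y0 : ℝ) (hs : 0 ≤ s0) (hy : 0 ≤ y0)
    (hab' : b * (s0 + 1) = a * (y0 + 1)) :
    a * (s0 / (1 + (y0 + 1))) + b * ((s0 + 1) / (1 + y0))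
      ≤ (a + b) * ((s0 + 1) / (1 + (y0 + 1))) := by
  have d1 : (0:ℝ) < 1 + y0 := by positivity
  have d2 : (0:ℝ) < 1 + (y0 + 1) := by positivity
  rw [← sub_nonneg]
  have e : (a + b) * ((s0 + 1) / (1 + (y0 + 1)))
      - (a * (s0 / (1 + (y0 + 1))) + b * ((s0 + 1) / (1 + y0)))
      = ((a + b) * (s0 + 1) * (1 + y0) - a * s0 * (1 + y0) - b * (s0+1) * (1 + (y0+1)))
        / ((1 + (y0 + 1)) * (1 + y0)) := by
    field_simp
    ring
  rw [e]
  apply div_nonneg _ (by positivity)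
  nlinarith [hab']

/-- key numeric inequality (hypergeometric supermartingale step) -/
lemma key_ineq (a b s0 y : ℕ) (hab : b * (s0 + 1) = a * y) (hb0 : y = 0 → b = 0) :
    (a : ℝ) * ((s0 : ℝ) / (1 + (y : ℝ))) + (b : ℝ) * (((s0 : ℝ) + 1) / (1 + ((y - 1 : ℕ) : ℝ)))
      ≤ ((a : ℝ) + (b : ℝ)) * (((s0 : ℝ) + 1) / (1 + (y : ℝ))) := by
  rcases Nat.eq_zero_or_pos y with hy | hy
  · subst hy
    rw [hb0 rfl]
    push_cast
    simp only [add_zero, div_one]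
    have := Nat.cast_nonneg (α := ℝ) a
    have := Nat.cast_nonneg (α := ℝ) s0
    nlinarith
  · obtain ⟨y0, rfl⟩ : ∃ y0, y = y0 + 1 := ⟨y - 1, by omega⟩
    have hy1 : ((y0 + 1 - 1 : ℕ) : ℝ) = (y0 : ℝ) := by push_cast; ring
    have hc : ((y0 + 1 : ℕ) : ℝ) = (y0 : ℝ) + 1 := by push_cast; ring
    rw [hy1, hc]
    have hab' : (b : ℝ) * ((s0 : ℝ) + 1) = (a : ℝ) * ((y0 : ℝ) + 1) := by
      exact_mod_cast congrArg (Nat.cast (R := ℝ)) hab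
    exact key_ineq_real _ _ _ _ (Nat.cast_nonneg s0) (Nat.cast_nonneg y0) hab'

/-- hypergeometric step: sum of the next-step martingale values over all
head-configurations with `s` ones is at most `C(m,s)` times the current value. -/
lemma sum_Mk_le (L : Finset (Fin d)) (jk : Fin d) (hjk : jk ∈ L) (s : ℕ) :
    ∑ A1 ∈ L.powersetCard s,
      (((A1.erase jk).card : ℝ)) / (1 + (((L \ A1).erase jk).card : ℝ))
      ≤ (L.card.choose s : ℝ) * ((s : ℝ) / (1 + ((L.card - s : ℕ) : ℝ))) := by
  obtain ⟨m0, hm⟩ : ∃ m0, L.card = m0 + 1 :=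
    ⟨L.card - 1, by have := card_pos.2 ⟨jk, hjk⟩; omega⟩
  rcases s with _ | s0
  · rw [powersetCard_zero]
    simp
  · -- split by whether jk ∈ A1
    rw [← sum_filter_add_sum_filter_not (L.powersetCard (s0+1)) (fun A1 => jk ∈ A1)]
    have hcount_not : ((L.powersetCard (s0+1)).filter (fun A1 => jk ∉ A1)).card
        = m0.choose (s0+1) := by
      rw [powersetCard_filter_not_mem, card_powersetCard, card_erase_of_mem hjk, hm]
      norm_num
    have hcount_tot : (L.powersetCard (s0+1)).card = (m0+1).choose (s0+1) := by
      rw [card_powersetCard, hm]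
    have hcount_mem : ((L.powersetCard (s0+1)).filter (fun A1 => jk ∈ A1)).card
        = m0.choose s0 := by
      have h := card_filter_add_card_filter_not
        (s := L.powersetCard (s0+1)) (p := fun A1 => jk ∈ A1)
      rw [hcount_not, hcount_tot] at h
      have hp : (m0+1).choose (s0+1) = m0.choose s0 + m0.choose (s0+1) :=
        Nat.choose_succ_succ m0 s0
      omega
    have e1 : ∀ A1 ∈ (L.powersetCard (s0+1)).filter (fun A1 => jk ∈ A1),
        (((A1.erase jk).card : ℝ)) / (1 + (((L \ A1).erase jk).card : ℝ))
          = (s0 : ℝ) / (1 + ((L.card - (s0+1) : ℕ) : ℝ)) := by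
      intro A1 hA1
      rw [mem_filter, mem_powersetCard] at hA1
      obtain ⟨⟨hsub, hcard⟩, hmem⟩ := hA1
      rw [card_erase_of_mem hmem, hcard]
      have h2 : (L \ A1).erase jk = L \ A1 :=
        erase_eq_of_notMem (by simp [mem_sdiff, hmem])
      rw [h2, card_sdiff_of_subset hsub, hcard]
      norm_num
    have e2 : ∀ A1 ∈ (L.powersetCard (s0+1)).filter (fun A1 => jk ∉ A1),
        (((A1.erase jk).card : ℝ)) / (1 + (((L \ A1).erase jk).card : ℝ))
          = ((s0 : ℝ) + 1) / (1 + ((L.card - (s0+1) - 1 : ℕ) : ℝ)) := by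
      intro A1 hA1
      rw [mem_filter, mem_powersetCard] at hA1
      obtain ⟨⟨hsub, hcard⟩, hmem⟩ := hA1
      rw [erase_eq_of_notMem hmem, hcard]
      have hjkin : jk ∈ L \ A1 := by rw [mem_sdiff]; exact ⟨hjk, hmem⟩
      rw [card_erase_of_mem hjkin, card_sdiff_of_subset hsub, hcard]
      push_cast
      ring_nf
    rw [Finset.sum_congr rfl e1, Finset.sum_congr rfl e2, sum_const, sum_const,
      hcount_mem, hcount_not, nsmul_eq_mul, nsmul_eq_mul]
    have hy : (L.card - (s0+1) : ℕ) = m0 - s0 := by omega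
    have hy1 : (L.card - (s0+1) - 1 : ℕ) = (m0 - s0) - 1 := by omega
    rw [hy1, hy]
    have hab : m0.choose (s0+1) * (s0 + 1) = m0.choose s0 * (m0 - s0) :=
      Nat.choose_succ_right_eq m0 s0
    have hb0 : m0 - s0 = 0 → m0.choose (s0+1) = 0 := by
      intro h
      exact Nat.choose_eq_zero_of_lt (by omega)
    have hkey := key_ineq (m0.choose s0) (m0.choose (s0+1)) s0 (m0 - s0) hab hb0
    have hcast : ((L.card.choose (s0+1) : ℕ) : ℝ)
        = ((m0.choose s0 : ℕ) : ℝ) + ((m0.choose (s0+1) : ℕ) : ℝ) := by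
      rw [hm]
      rw [Nat.choose_succ_succ m0 s0]
      push_cast
      ring
    rw [hcast]
    push_cast at hkey ⊢
    convert hkey using 2 <;> push_cast <;> ring

lemma tele (f : ℕ → ℝ) (T D : ℕ) (hT : T ≤ D) :
    f T = f D + ∑ k ∈ range D, (f k - f (k+1)) * (if T ≤ k then 1 else 0) := by
  have h1 : ∑ k ∈ range D, (f k - f (k+1)) * (if T ≤ k then 1 else 0)
      = ∑ k ∈ Ico T D, (f k - f (k+1)) := by
    simp only [mul_ite, mul_one, mul_zero]
    rw [← sum_filter]
    congr 1
    ext i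
    simp only [mem_filter, mem_range, mem_Ico]
    omega
  rw [h1, sum_Ico_eq_sum_range]
  have h2 : ∑ k ∈ range (D - T), (f (T + k) - f (T + k + 1))
      = f (T + 0) - f (T + (D - T)) := by
    exact sum_range_sub' (fun i => f (T + i)) (D - T)
  have h3 : ∀ k, f (T + k) - f (T + (k+1)) = f (T+k) - f (T + k + 1) := by
    intro k; rw [← Nat.add_assoc]
  calc f T = f D + (f (T + 0) - f (T + (D - T))) := by
        rw [Nat.add_zero, Nat.add_sub_cancel' hT]; ring
    _ = f D + ∑ k ∈ range (D - T), (f (T + k) - f (T + k + 1)) := by rw [h2]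
    _ = f D + ∑ k ∈ range (D - T), (fun k => f k - f (k + 1)) (T + k) := by norm_num

/-- the supermartingale step: each increment term has nonpositive expectation -/
lemma step_le (c q : ℝ) (ρ : ℝ) (hρ0 : 0 ≤ ρ) (hρ1 : ρ ≤ 1)
    (H0 Γ : Finset (Fin d)) (hΓ : ∀ i ∈ Γ, i ∉ H0) (k : ℕ) (hk : k < d) :
    ∑ A ∈ H0.powerset, ρ ^ A.card * (1 - ρ) ^ (H0.card - A.card) *
      ((Mstat H0 (A ∪ Γ) k - Mstat H0 (A ∪ Γ) (k+1)) *
        (if Khat c q (A ∪ Γ) ≤ k then 1 else 0)) ≤ 0 := by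
  set jk : Fin d := ⟨k, hk⟩ with hjkdef
  have hval : ∀ i : Fin d, (i : ℕ) = k ↔ i = jk := by
    intro i
    constructor
    · intro h; exact Fin.ext h
    · intro h; rw [h]
  have hstep : ∀ X : Finset (Fin d), X.filter (fun i : Fin d => (i:ℕ) < k)
      = (X.filter (fun i : Fin d => (i:ℕ) < k+1)).erase jk := by
    intro X
    ext i
    simp only [mem_filter, mem_erase]
    constructor
    · rintro ⟨hx, hlt⟩
      refine ⟨fun h => ?_, hx, by omega⟩
      rw [← hval i] at h
      omega
    · rintro ⟨hne, hx, hlt⟩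
      refine ⟨hx, ?_⟩
      have : (i : ℕ) ≠ k := fun h => hne ((hval i).1 h)
      omega
  by_cases hjk : jk ∈ H0
  swap
  · -- position k is not null : increment vanishes
    have hzero : ∀ A ∈ H0.powerset, ρ ^ A.card * (1 - ρ) ^ (H0.card - A.card) *
        ((Mstat H0 (A ∪ Γ) k - Mstat H0 (A ∪ Γ) (k+1)) *
          (if Khat c q (A ∪ Γ) ≤ k then 1 else 0)) = 0 := by
      intro A hA
      have hMeq : Mstat H0 (A ∪ Γ) k = Mstat H0 (A ∪ Γ) (k+1) := by
        unfold Mstat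
        rw [hstep ((A ∪ Γ) ∩ H0), hstep (H0 \ (A ∪ Γ)),
          erase_eq_of_notMem (fun h => hjk (mem_inter.1 (mem_filter.1 h).1).2),
          erase_eq_of_notMem (fun h => hjk (mem_sdiff.1 (mem_filter.1 h).1).1)]
      rw [hMeq]
      ring
    rw [Finset.sum_congr rfl hzero]
    simp
  · -- position k is null
    set L : Finset (Fin d) := H0.filter (fun i : Fin d => (i:ℕ) < k+1) with hLdef
    set R : Finset (Fin d) := H0.filter (fun i : Fin d => ¬ (i:ℕ) < k+1) with hRdef
    have hjkL : jk ∈ L := by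
      rw [hLdef, mem_filter]
      exact ⟨hjk, by simp [hjkdef]⟩
    have hLR : Disjoint L R := by
      rw [disjoint_left]
      intro a haL haR
      rw [hLdef, mem_filter] at haL
      rw [hRdef, mem_filter] at haR
      exact haR.2 haL.2
    have hunion : H0 = L ∪ R := (filter_union_filter_not_eq _ H0).symm
    have hsplit : H0.powerset = (L ∪ R).powerset := by rw [← hunion]
    rw [hsplit, sum_powerset_union_disj hLR, Finset.sum_comm]
    have hLmem : ∀ i : Fin d, i ∈ L ↔ i ∈ H0 ∧ (i:ℕ) < k+1 := fun i => by
      rw [hLdef]; exact mem_filter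
    have hRmem : ∀ i : Fin d, i ∈ R ↔ i ∈ H0 ∧ ¬ (i:ℕ) < k+1 := fun i => by
      rw [hRdef]; exact mem_filter
    apply Finset.sum_nonpos
    intro A2 hA2
    have hA2R : A2 ⊆ R := mem_powerset.1 hA2
    rw [sum_powerset_card]
    apply Finset.sum_nonpos
    intro s hs
    rw [mem_range, Nat.lt_succ_iff] at hs
    obtain ⟨A1s, hA1s⟩ := powersetCard_nonempty.2 hs
    -- abbreviations
    set W0 : ℝ := ρ ^ (s + A2.card) * (1 - ρ) ^ (H0.card - (s + A2.card)) with hW0def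
    set m1 : ℝ := (s : ℝ) / (1 + ((L.card - s : ℕ) : ℝ)) with hm1def
    set g0 : ℝ := if Khat c q (A1s ∪ A2 ∪ Γ) ≤ k then (1:ℝ) else 0 with hg0def
    set v : Finset (Fin d) → ℝ :=
      fun A1 => (((A1.erase jk).card : ℝ)) / (1 + (((L \ A1).erase jk).card : ℝ)) with hvdef
    -- the per-A1 computations
    have main : ∀ A1 ∈ L.powersetCard s,
        ρ ^ (A1 ∪ A2).card * (1 - ρ) ^ (H0.card - (A1 ∪ A2).card) *
          ((Mstat H0 (A1 ∪ A2 ∪ Γ) k - Mstat H0 (A1 ∪ A2 ∪ Γ) (k+1)) *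
            (if Khat c q (A1 ∪ A2 ∪ Γ) ≤ k then 1 else 0))
        = W0 * ((v A1 - m1) * g0) := by
      intro A1 hA1
      have hA1L : A1 ⊆ L := (mem_powersetCard.1 hA1).1
      have hA1c : A1.card = s := (mem_powersetCard.1 hA1).2
      have hA1H : ∀ i ∈ A1, i ∈ H0 ∧ (i:ℕ) < k+1 := fun i hi => (hLmem i).1 (hA1L hi)
      have hA2H : ∀ i ∈ A2, i ∈ H0 ∧ ¬ (i:ℕ) < k+1 := fun i hi => (hRmem i).1 (hA2R hi)
      have hcardU : (A1 ∪ A2).card = s + A2.card := by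
        rw [card_union_of_disjoint (hLR.mono hA1L hA2R), hA1c]
      have claim1 : ((A1 ∪ A2 ∪ Γ) ∩ H0).filter (fun i : Fin d => (i:ℕ) < k+1) = A1 := by
        ext i
        simp only [mem_filter, mem_inter, mem_union]
        constructor
        · rintro ⟨⟨(h1 | h2) | h3, hH0⟩, hlt⟩
          · exact h1
          · exact absurd hlt (hA2H i h2).2
          · exact absurd hH0 (hΓ i h3)
        · intro h1
          exact ⟨⟨Or.inl (Or.inl h1), (hA1H i h1).1⟩, (hA1H i h1).2⟩
      have claim2 : (H0 \ (A1 ∪ A2 ∪ Γ)).filter (fun i : Fin d => (i:ℕ) < k+1)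
          = L \ A1 := by
        ext i
        simp only [mem_filter, mem_sdiff, mem_union, hLmem i]
        constructor
        · rintro ⟨⟨hH0, hnot⟩, hlt⟩
          exact ⟨⟨hH0, hlt⟩, fun h => hnot (Or.inl (Or.inl h))⟩
        · rintro ⟨⟨hH0, hlt⟩, hnA1⟩
          refine ⟨⟨hH0, ?_⟩, hlt⟩
          rintro ((h1 | h2) | h3)
          · exact hnA1 h1
          · exact (hA2H i h2).2 hlt
          · exact hΓ i h3 hH0
      have hM1 : Mstat H0 (A1 ∪ A2 ∪ Γ) (k+1) = m1 := by
        unfold Mstat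
        rw [claim1, claim2, hA1c, card_sdiff_of_subset hA1L, hA1c]
      have hMk : Mstat H0 (A1 ∪ A2 ∪ Γ) k = v A1 := by
        unfold Mstat
        rw [hstep ((A1 ∪ A2 ∪ Γ) ∩ H0), hstep (H0 \ (A1 ∪ A2 ∪ Γ)), claim1, claim2]
      have hg : (if Khat c q (A1 ∪ A2 ∪ Γ) ≤ k then (1:ℝ) else 0) = g0 := by
        rw [hg0def]
        -- the stopping event only depends on the head count and the tail
        have hA1sL : A1s ⊆ L := (mem_powersetCard.1 hA1s).1
        have hA1sc : A1s.card = s := (mem_powersetCard.1 hA1s).2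
        have hA1sH : ∀ i ∈ A1s, i ∈ H0 ∧ (i:ℕ) < k+1 := fun i hi => (hLmem i).1 (hA1sL hi)
        have hhead : ∀ (X : Finset (Fin d)), (∀ i ∈ X, i ∈ H0 ∧ (i:ℕ) < k+1) →
            (X ∪ A2 ∪ Γ).filter (fun i : Fin d => (i:ℕ) < k+1)
              = X ∪ Γ.filter (fun i : Fin d => (i:ℕ) < k+1) := by
          intro X hX
          ext i
          simp only [mem_filter, mem_union]
          constructor
          · rintro ⟨(h1 | h2) | h3, hlt⟩
            · exact Or.inl h1
            · exact absurd hlt (hA2H i h2).2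
            · exact Or.inr ⟨h3, hlt⟩
          · rintro (h1 | ⟨h3, hlt⟩)
            · exact ⟨Or.inl (Or.inl h1), (hX i h1).2⟩
            · exact ⟨Or.inr h3, hlt⟩
        have htail : ∀ (X : Finset (Fin d)), (∀ i ∈ X, i ∈ H0 ∧ (i:ℕ) < k+1) →
            (X ∪ A2 ∪ Γ).filter (fun i : Fin d => ¬ (i:ℕ) < k+1)
              = A2 ∪ Γ.filter (fun i : Fin d => ¬ (i:ℕ) < k+1) := by
          intro X hX
          ext i
          simp only [mem_filter, mem_union]
          constructor
          · rintro ⟨(h1 | h2) | h3, hlt⟩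
            · exact absurd (hX i h1).2 hlt
            · exact Or.inl h2
            · exact Or.inr ⟨h3, hlt⟩
          · rintro (h2 | ⟨h3, hlt⟩)
            · exact ⟨Or.inl (Or.inr h2), (hA2H i h2).2⟩
            · exact ⟨Or.inr h3, hlt⟩
        have hcnt : ∀ (X : Finset (Fin d)), X ⊆ L → (∀ i ∈ X, i ∈ H0 ∧ (i:ℕ) < k+1) →
            nb (k+1) (X ∪ A2 ∪ Γ)
              = X.card + (Γ.filter (fun i : Fin d => (i:ℕ) < k+1)).card := by
          intro X hXL hX
          unfold nb
          rw [hhead X hX]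
          apply card_union_of_disjoint
          rw [disjoint_left]
          intro a haX haΓ
          exact hΓ a (mem_filter.1 haΓ).1 (hX a haX).1
        have hiff := Khat_le_congr c q k (A1 ∪ A2 ∪ Γ) (A1s ∪ A2 ∪ Γ)
          (by rw [hcnt A1 hA1L hA1H, hcnt A1s hA1sL hA1sH, hA1c, hA1sc])
          (by rw [htail A1 hA1H, htail A1s hA1sH])
        exact if_congr hiff rfl rfl
      rw [hcardU, hM1, hMk, hg, hW0def]
    rw [Finset.sum_congr rfl main]
    have hWg : 0 ≤ W0 * g0 := by
      apply mul_nonneg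
      · apply mul_nonneg (pow_nonneg hρ0 _) (pow_nonneg (by linarith) _)
      · rw [hg0def]; split_ifs <;> norm_num
    have hfact : ∑ A1 ∈ L.powersetCard s, W0 * ((v A1 - m1) * g0)
        = (W0 * g0) * ((∑ A1 ∈ L.powersetCard s, v A1) - (L.card.choose s : ℝ) * m1) := by
      calc ∑ A1 ∈ L.powersetCard s, W0 * ((v A1 - m1) * g0)
          = ∑ A1 ∈ L.powersetCard s, ((W0 * g0) * v A1 - (W0 * g0) * m1) :=
            Finset.sum_congr rfl (fun A1 _ => by ring)
        _ = (∑ A1 ∈ L.powersetCard s, (W0 * g0) * v A1)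
            - ∑ A1 ∈ L.powersetCard s, (W0 * g0) * m1 := Finset.sum_sub_distrib _ _
        _ = (W0 * g0) * (∑ A1 ∈ L.powersetCard s, v A1)
            - ((L.powersetCard s).card : ℝ) * ((W0 * g0) * m1) := by
            rw [← mul_sum, sum_const, nsmul_eq_mul]
        _ = (W0 * g0) * ((∑ A1 ∈ L.powersetCard s, v A1) - (L.card.choose s : ℝ) * m1) := by
            rw [card_powersetCard]; ring
    have hsum : ∑ A1 ∈ L.powersetCard s, v A1 ≤ (L.card.choose s : ℝ) * m1 := by
      rw [hvdef, hm1def]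
      exact sum_Mk_le L jk hjkL s
    rw [hfact]
    calc (W0 * g0) * ((∑ A1 ∈ L.powersetCard s, v A1) - (L.card.choose s : ℝ) * m1)
        ≤ (W0 * g0) * 0 := mul_le_mul_of_nonneg_left (by linarith) hWg
      _ = 0 := mul_zero _

/-- binomial bound for the terminal value: `E[V⁺/(1+V⁻)] ≤ ρ/(1-ρ)` at time `d`. -/
lemma EMd_le (c q ρ : ℝ) (hρ0 : 0 ≤ ρ) (hρ1 : ρ < 1)
    (H0 Γ : Finset (Fin d)) (hΓ : ∀ i ∈ Γ, i ∉ H0) :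
    ∑ A ∈ H0.powerset, ρ ^ A.card * (1 - ρ) ^ (H0.card - A.card) * Mstat H0 (A ∪ Γ) d
      ≤ ρ / (1 - ρ) := by
  set n := H0.card with hndef
  have hMd : ∀ A ∈ H0.powerset, ρ ^ A.card * (1 - ρ) ^ (n - A.card) * Mstat H0 (A ∪ Γ) d
      = ρ ^ A.card * (1 - ρ) ^ (n - A.card)
        * ((A.card : ℝ) / (1 + ((n - A.card : ℕ) : ℝ))) := by
    intro A hA
    have hAH : A ⊆ H0 := mem_powerset.1 hA
    have h1 : ((A ∪ Γ) ∩ H0) = A := by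
      ext i
      simp only [mem_inter, mem_union]
      constructor
      · rintro ⟨h1 | h2, hH⟩
        · exact h1
        · exact absurd hH (hΓ i h2)
      · intro h; exact ⟨Or.inl h, hAH h⟩
    have h2 : H0 \ (A ∪ Γ) = H0 \ A := by
      ext i
      simp only [mem_sdiff, mem_union]
      constructor
      · rintro ⟨hH, hn⟩; exact ⟨hH, fun h => hn (Or.inl h)⟩
      · rintro ⟨hH, hn⟩
        refine ⟨hH, ?_⟩
        rintro (h | h)
        · exact hn h
        · exact hΓ i h hH
    have h3 : ∀ X : Finset (Fin d), X.filter (fun i : Fin d => (i:ℕ) < d) = X :=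
      fun X => filter_true_of_mem (fun i _ => i.isLt)
    unfold Mstat
    rw [h1, h2, h3, h3, card_sdiff_of_subset hAH]
  rw [Finset.sum_congr rfl hMd, sum_powerset_card]
  have hconst : ∀ s ∈ range (n + 1),
      ∑ A ∈ H0.powersetCard s, ρ ^ A.card * (1 - ρ) ^ (n - A.card)
        * ((A.card : ℝ) / (1 + ((n - A.card : ℕ) : ℝ)))
      = (n.choose s : ℝ) * (ρ ^ s * (1 - ρ) ^ (n - s) * ((s:ℝ) / (1 + ((n - s : ℕ) : ℝ)))) := by
    intro s _
    have he : ∀ A ∈ H0.powersetCard s, ρ ^ A.card * (1 - ρ) ^ (n - A.card)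
        * ((A.card : ℝ) / (1 + ((n - A.card : ℕ) : ℝ)))
        = ρ ^ s * (1 - ρ) ^ (n - s) * ((s:ℝ) / (1 + ((n - s : ℕ) : ℝ))) := by
      intro A hA
      rw [(mem_powersetCard.1 hA).2]
    rw [Finset.sum_congr rfl he, sum_const, nsmul_eq_mul, card_powersetCard]
  rw [Finset.sum_congr rfl hconst, Finset.sum_range_succ']
  have hzero : (n.choose 0 : ℝ) * (ρ ^ 0 * (1 - ρ) ^ (n - 0) * ((0:ℕ):ℝ) / (1 + ((n - 0 : ℕ):ℝ))) = 0 := by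
    norm_num
  have h1ρ : (0:ℝ) < 1 - ρ := by linarith
  have hterm : ∀ i ∈ range n,
      (n.choose (i+1) : ℝ) * (ρ ^ (i+1) * (1 - ρ) ^ (n - (i+1))
        * (((i+1 : ℕ):ℝ) / (1 + ((n - (i+1) : ℕ) : ℝ))))
      = (ρ / (1 - ρ)) * ((n.choose i : ℝ) * (ρ ^ i * (1 - ρ) ^ (n - i))) := by
    intro i hi
    rw [mem_range] at hi
    set z := n - (i+1) with hzdef
    have hz1 : n - i = z + 1 := by omega
    have hcc : (n.choose (i+1) : ℝ) * ((i:ℝ) + 1) = (n.choose i : ℝ) * ((z:ℝ) + 1) := by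
      have := Nat.choose_succ_right_eq n i
      have hzz : n - i = z + 1 := hz1
      rw [hzz] at this
      exact_mod_cast congrArg (Nat.cast (R := ℝ)) this
    rw [hz1]
    have hcast : ((i + 1 : ℕ) : ℝ) = (i:ℝ) + 1 := by push_cast; ring
    rw [hcast]
    have hzpos : (0:ℝ) < 1 + (z:ℝ) := by positivity
    have key : (n.choose (i+1) : ℝ) * (((i:ℝ)+1)/(1+(z:ℝ))) = (n.choose i : ℝ) := by
      rw [mul_div_assoc', div_eq_iff (ne_of_gt hzpos)]
      linarith [hcc]
    calc (n.choose (i+1):ℝ) * (ρ^(i+1) * (1-ρ)^z * (((i:ℝ)+1)/(1+(z:ℝ))))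
        = (ρ^(i+1) * (1-ρ)^z) * ((n.choose (i+1):ℝ) * (((i:ℝ)+1)/(1+(z:ℝ)))) := by ring
      _ = (ρ^(i+1) * (1-ρ)^z) * (n.choose i : ℝ) := by rw [key]
      _ = (ρ/(1-ρ)) * ((n.choose i:ℝ) * (ρ^i * (1-ρ)^(z+1))) := by
          rw [pow_succ, pow_succ]
          field_simp
  rw [Finset.sum_congr rfl hterm, ← mul_sum]
  have hg00 : (n.choose 0 : ℝ) * (ρ ^ 0 * (1 - ρ) ^ (n - 0)
      * (((0 : ℕ):ℝ) / (1 + ((n - 0 : ℕ):ℝ)))) = 0 := by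
    norm_num
  rw [hg00, add_zero]
  have hbnonneg : ∀ i, 0 ≤ (n.choose i : ℝ) * (ρ ^ i * (1 - ρ) ^ (n - i)) := by
    intro i
    apply mul_nonneg (Nat.cast_nonneg _)
    exact mul_nonneg (pow_nonneg hρ0 _) (pow_nonneg (by linarith) _)
  have hbinom : ∑ i ∈ range (n+1), (n.choose i : ℝ) * (ρ ^ i * (1 - ρ) ^ (n - i)) = 1 := by
    have h := add_pow (R := ℝ) ρ (1 - ρ) n
    have h2 : ((ρ + (1 - ρ)) : ℝ) = 1 := by ring
    rw [h2, one_pow] at h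
    calc ∑ i ∈ range (n+1), (n.choose i : ℝ) * (ρ ^ i * (1 - ρ) ^ (n - i))
        = ∑ m ∈ range (n+1), ρ ^ m * (1 - ρ) ^ (n - m) * ((n.choose m : ℕ) : ℝ) :=
          Finset.sum_congr rfl (fun i _ => by ring)
      _ = 1 := h.symm
  have hb' : ∑ i ∈ range n, (n.choose i : ℝ) * (ρ ^ i * (1 - ρ) ^ (n - i))
      ≤ ∑ i ∈ range (n+1), (n.choose i : ℝ) * (ρ ^ i * (1 - ρ) ^ (n - i)) :=
    sum_le_sum_of_subset_of_nonneg (range_subset_range.2 (Nat.le_succ n)) (fun i _ _ => hbnonneg i)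
  have hb : ∑ i ∈ range n, (n.choose i : ℝ) * (ρ ^ i * (1 - ρ) ^ (n - i)) ≤ 1 :=
    hb'.trans_eq hbinom
  calc (ρ/(1-ρ)) * ∑ i ∈ range n, (n.choose i : ℝ) * (ρ ^ i * (1 - ρ) ^ (n - i))
      ≤ (ρ/(1-ρ)) * 1 := mul_le_mul_of_nonneg_left hb (div_nonneg hρ0 (by linarith))
    _ = ρ/(1-ρ) := mul_one _

/-- optional stopping: `E[M(k̂)] ≤ ρ/(1-ρ)`. -/
lemma core_le (c q ρ : ℝ) (hρ0 : 0 ≤ ρ) (hρ1 : ρ < 1)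
    (H0 Γ : Finset (Fin d)) (hΓ : ∀ i ∈ Γ, i ∉ H0) :
    ∑ A ∈ H0.powerset, ρ ^ A.card * (1 - ρ) ^ (H0.card - A.card) *
      Mstat H0 (A ∪ Γ) (Khat c q (A ∪ Γ)) ≤ ρ / (1 - ρ) := by
  have htele : ∀ A ∈ H0.powerset,
      ρ ^ A.card * (1 - ρ) ^ (H0.card - A.card) * Mstat H0 (A ∪ Γ) (Khat c q (A ∪ Γ))
      = ρ ^ A.card * (1 - ρ) ^ (H0.card - A.card) * Mstat H0 (A ∪ Γ) d
        + ∑ k ∈ range d, ρ ^ A.card * (1 - ρ) ^ (H0.card - A.card) *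
            ((Mstat H0 (A ∪ Γ) k - Mstat H0 (A ∪ Γ) (k+1)) *
              (if Khat c q (A ∪ Γ) ≤ k then 1 else 0)) := by
    intro A _
    rw [← mul_sum, ← mul_add, tele (Mstat H0 (A ∪ Γ)) (Khat c q (A ∪ Γ)) d (Khat_le c q _)]
  rw [Finset.sum_congr rfl htele, Finset.sum_add_distrib, Finset.sum_comm]
  have h2 : ∑ k ∈ range d, ∑ A ∈ H0.powerset,
      ρ ^ A.card * (1 - ρ) ^ (H0.card - A.card) *
        ((Mstat H0 (A ∪ Γ) k - Mstat H0 (A ∪ Γ) (k+1)) *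
          (if Khat c q (A ∪ Γ) ≤ k then 1 else 0)) ≤ 0 := by
    apply Finset.sum_nonpos
    intro k hk
    exact step_le c q ρ hρ0 hρ1.le H0 Γ hΓ k (mem_range.1 hk)
  have h1 := EMd_le c q ρ hρ0 hρ1 H0 Γ hΓ
  linarith

/-- the finite FDR bound, for a fixed configuration of the non-null indicators. -/
lemma finite_fdr (c q ρ : ℝ) (hc0 : 0 < c) (hc1 : c < 1) (hq0 : 0 < q)
    (hρ0 : 0 ≤ ρ) (hρc : ρ ≤ c)
    (H0 Γ : Finset (Fin d)) (hΓ : ∀ i ∈ Γ, i ∉ H0) :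
    ∑ A ∈ H0.powerset, ρ ^ A.card * (1 - ρ) ^ (H0.card - A.card) * fdpB c q H0 (A ∪ Γ)
      ≤ q := by
  have hρ1 : ρ < 1 := lt_of_le_of_lt hρc hc1
  have hw : ∀ A : Finset (Fin d), 0 ≤ ρ ^ A.card * (1 - ρ) ^ (H0.card - A.card) :=
    fun A => mul_nonneg (pow_nonneg hρ0 _) (pow_nonneg (by linarith) _)
  have h1 : ∑ A ∈ H0.powerset, ρ ^ A.card * (1 - ρ) ^ (H0.card - A.card) * fdpB c q H0 (A ∪ Γ)
      ≤ ∑ A ∈ H0.powerset, ρ ^ A.card * (1 - ρ) ^ (H0.card - A.card) *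
          (((1 - c) / c) * q * Mstat H0 (A ∪ Γ) (Khat c q (A ∪ Γ))) := by
    apply Finset.sum_le_sum
    intro A _
    exact mul_le_mul_of_nonneg_left (fdpB_le c q hc0 hc1 hq0 H0 (A ∪ Γ)) (hw A)
  have h2 : ∑ A ∈ H0.powerset, ρ ^ A.card * (1 - ρ) ^ (H0.card - A.card) *
      (((1 - c) / c) * q * Mstat H0 (A ∪ Γ) (Khat c q (A ∪ Γ)))
      = ((1 - c) / c) * q * ∑ A ∈ H0.powerset, ρ ^ A.card * (1 - ρ) ^ (H0.card - A.card) *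
          Mstat H0 (A ∪ Γ) (Khat c q (A ∪ Γ)) := by
    rw [mul_sum]
    exact Finset.sum_congr rfl (fun A _ => by ring)
  have h3 := core_le c q ρ hρ0 hρ1 H0 Γ hΓ
  have h4 : ρ / (1 - ρ) ≤ c / (1 - c) :=
    div_le_div₀ hc0.le hρc (by linarith) (by linarith)
  have hcoef : 0 ≤ ((1 - c) / c) * q :=
    mul_nonneg (div_nonneg (by linarith) hc0.le) hq0.le
  have h5 : ((1 - c) / c) * q * (c / (1 - c)) = q := by
    field_simp
    exact div_self (by linarith : (1:ℝ) - c ≠ 0)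
  calc ∑ A ∈ H0.powerset, ρ ^ A.card * (1 - ρ) ^ (H0.card - A.card) * fdpB c q H0 (A ∪ Γ)
      ≤ ((1 - c) / c) * q * ∑ A ∈ H0.powerset, ρ ^ A.card * (1 - ρ) ^ (H0.card - A.card) *
          Mstat H0 (A ∪ Γ) (Khat c q (A ∪ Γ)) := h1.trans_eq h2
    _ ≤ ((1 - c) / c) * q * (c / (1 - c)) := by
        apply mul_le_mul_of_nonneg_left (h3.trans h4) hcoef
    _ = q := h5

/-! ### bridge to the real-valued formulation -/

noncomputable def bitsOf (c : ℝ) (p : Fin d → ℝ) : Finset (Fin d) :=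
  univ.filter (fun i : Fin d => p i ≤ c)

lemma seqStepK_eq (c q : ℝ) (p : Fin d → ℝ) :
    seqStepK c q p = Khat c q (bitsOf c p) := by
  unfold seqStepK Khat KSet
  congr 1
  ext k
  have e1 : {i : Fin d | (i : ℕ) < k ∧ c < p i}
      = ↑(univ.filter (fun i : Fin d => (i:ℕ) < k ∧ i ∉ bitsOf c p)) := by
    ext i
    simp [bitsOf, not_le]
  have e2 : {i : Fin d | (i : ℕ) < k ∧ p i ≤ c}
      = ↑((bitsOf c p).filter (fun i : Fin d => (i:ℕ) < k)) := by
    ext i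
    simp only [Set.mem_setOf_eq, coe_filter, bitsOf, mem_filter, mem_univ, true_and,
      Set.mem_setOf_eq]
    tauto
  have n1 : {i : Fin d | (i : ℕ) < k ∧ c < p i}.ncard = na k (bitsOf c p) := by
    rw [e1, Set.ncard_coe_finset]; rfl
  have n2 : {i : Fin d | (i : ℕ) < k ∧ p i ≤ c}.ncard = nb k (bitsOf c p) := by
    rw [e2, Set.ncard_coe_finset]; rfl
  rw [Set.mem_setOf_eq, Set.mem_setOf_eq, n1, n2]

lemma seqStepSel_eq (c q : ℝ) (p : Fin d → ℝ) :
    seqStepSel c q p = ↑(selB c q (bitsOf c p)) := by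
  ext i
  simp only [seqStepSel, Set.mem_setOf_eq, selB, coe_filter, mem_filter, bitsOf, mem_univ,
    true_and, Set.mem_setOf_eq]
  rw [seqStepK_eq]
  show _ ↔ i ∈ (selB c q (bitsOf c p) : Set (Fin d))
  rw [Finset.mem_coe, selB, Finset.mem_filter, bitsOf, Finset.mem_filter]
  simp only [Finset.mem_univ, true_and]
  constructor <;> rintro ⟨h1, h2⟩ <;> exact ⟨h2, by convert h1 using 3⟩

lemma integrand_eq (c q : ℝ) (H0 : Finset (Fin d)) (p : Fin d → ℝ) :
    ((seqStepSel c q p ∩ (H0 : Set (Fin d))).ncard : ℝ)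
        / max ((seqStepSel c q p).ncard : ℝ) 1 = fdpB c q H0 (bitsOf c p) := by
  rw [seqStepSel_eq, ← Finset.coe_inter, Set.ncard_coe_finset, Set.ncard_coe_finset]
  rfl

/-- merging null and non-null coordinates -/
noncomputable def merge (H0 : Finset (Fin d)) (u : H0 → ℝ) (v : {i : Fin d // i ∉ H0} → ℝ) :
    Fin d → ℝ :=
  fun i => if h : i ∈ H0 then u ⟨i, h⟩ else v ⟨i, h⟩

noncomputable def G (c q : ℝ) (H0 : Finset (Fin d))
    (z : (H0 → ℝ) × ({i : Fin d // i ∉ H0} → ℝ)) : ℝ :=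
  fdpB c q H0 (bitsOf c (merge H0 z.1 z.2))

lemma merge_eq (H0 : Finset (Fin d)) (p : Fin d → ℝ) :
    merge H0 (fun i : H0 => p i) (fun i : {i : Fin d // i ∉ H0} => p i) = p := by
  funext i
  by_cases h : i ∈ H0 <;> simp [merge, h]

lemma measurable_comp_bits {X : Type*} [MeasurableSpace X] (c : ℝ)
    (e : X → (Fin d → ℝ)) (he : Measurable e) (f : Finset (Fin d) → ℝ) :
    Measurable (fun x => f (bitsOf c (e x))) := by
  have hrw : (fun x => f (bitsOf c (e x)))
      = fun x => ∑ B : Finset (Fin d), if B = bitsOf c (e x) then f B else 0 := by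
    funext x
    rw [Finset.sum_ite_eq' Finset.univ (bitsOf c (e x)) f]
    simp
  rw [hrw]
  apply Finset.measurable_sum
  intro B _
  have hset : MeasurableSet {x : X | bitsOf c (e x) = B} := by
    have : {x : X | bitsOf c (e x) = B}
        = ⋂ i : Fin d, {x : X | (e x i ≤ c) ↔ i ∈ B} := by
      ext x
      simp only [Set.mem_setOf_eq, Set.mem_iInter]
      constructor
      · intro h i
        rw [← h]
        simp [bitsOf]
      · intro h
        ext i
        simp only [bitsOf, mem_filter, mem_univ, true_and]
        exact h i
    rw [this]
    apply MeasurableSet.iInter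
    intro i
    have hm : Measurable (fun x => e x i) := (measurable_pi_apply i).comp he
    by_cases hB : i ∈ B
    · have : {x : X | (e x i ≤ c) ↔ i ∈ B} = {x : X | e x i ≤ c} := by
        ext x; simp [hB]
      rw [this]
      exact hm measurableSet_Iic
    · have : {x : X | (e x i ≤ c) ↔ i ∈ B} = {x : X | e x i ≤ c}ᶜ := by
        ext x; simp [hB]
      rw [this]
      exact (hm measurableSet_Iic).compl
  have : (fun x => if B = bitsOf c (e x) then f B else 0)
      = Set.indicator {x : X | bitsOf c (e x) = B} (fun _ => f B) := by
    funext x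
    rw [Set.indicator_apply]
    exact if_congr ⟨fun h => h.symm, fun h => h.symm⟩ rfl rfl
  rw [this]
  exact (measurable_const (a := f B)).indicator hset

lemma measurable_merge (H0 : Finset (Fin d)) :
    Measurable (fun z : (H0 → ℝ) × ({i : Fin d // i ∉ H0} → ℝ) => merge H0 z.1 z.2) := by
  apply measurable_pi_lambda
  intro i
  unfold merge
  by_cases h : i ∈ H0
  · simp only [dif_pos h]
    exact (measurable_pi_apply _).comp measurable_fst
  · simp only [dif_neg h]
    exact (measurable_pi_apply _).comp measurable_snd

lemma measurable_G (c q : ℝ) (H0 : Finset (Fin d)) : Measurable (G c q H0) :=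
  measurable_comp_bits c _ (measurable_merge H0) (fdpB c q H0)

/-- the pointwise (in the non-null coordinates) bound for the inner integral -/
lemma inner_le (c q : ℝ) (hc0 : 0 < c) (hc1 : c < 1) (hq0 : 0 < q)
    (H0 : Finset (Fin d)) (ν : Measure ℝ) [IsProbabilityMeasure ν]
    (hν : ν (Set.Iic c) ≤ ENNReal.ofReal c)
    (v : {i : Fin d // i ∉ H0} → ℝ) :
    ∫ u, G c q H0 (u, v) ∂(Measure.pi fun _ : H0 => ν) ≤ q := by
  set ρ : ℝ := (ν (Set.Iic c)).toReal with hρdef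
  have hρ0 : 0 ≤ ρ := ENNReal.toReal_nonneg
  have hρc : ρ ≤ c := ENNReal.toReal_le_of_le_ofReal hc0.le hν
  set Γv : Finset (Fin d) :=
    univ.filter (fun i : Fin d => if h : i ∈ H0 then False else v ⟨i, h⟩ ≤ c) with hΓdef
  have hΓ : ∀ i ∈ Γv, i ∉ H0 := by
    intro i hi
    rw [hΓdef, mem_filter] at hi
    by_cases h : i ∈ H0
    · rw [dif_pos h] at hi
      exact absurd hi.2 not_false
    · exact h
  set S : Finset (Fin d) → Set (H0 → ℝ) :=
    fun A => Set.univ.pi (fun i : H0 =>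
      if (i : Fin d) ∈ A then Set.Iic c else (Set.Iic c)ᶜ) with hSdef
  have hSmeas : ∀ A, MeasurableSet (S A) := by
    intro A
    apply MeasurableSet.univ_pi
    intro i
    split_ifs
    · exact measurableSet_Iic
    · exact measurableSet_Iic.compl
  have hbits : ∀ A ∈ H0.powerset, ∀ u ∈ S A, bitsOf c (merge H0 u v) = A ∪ Γv := by
    intro A hA u hu
    have hAH : A ⊆ H0 := mem_powerset.1 hA
    ext i
    simp only [bitsOf, mem_filter, mem_univ, true_and, mem_union]
    by_cases h : i ∈ H0
    · have hui := hu ⟨i, h⟩ (Set.mem_univ _)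
      simp only at hui
      have hmerge : merge H0 u v i = u ⟨i, h⟩ := dif_pos h
      rw [hmerge]
      have hiΓ : i ∉ Γv := fun hiΓ => hΓ i hiΓ h
      by_cases hiA : i ∈ A
      · rw [if_pos hiA] at hui
        simp only [Set.mem_Iic] at hui
        constructor
        · intro _; exact Or.inl hiA
        · intro _; exact hui
      · rw [if_neg hiA] at hui
        simp only [Set.mem_compl_iff, Set.mem_Iic, not_le] at hui
        constructor
        · intro hle; linarith
        · rintro (h1 | h2)
          · exact absurd h1 hiA
          · exact absurd h2 hiΓ
    · have hmerge : merge H0 u v i = v ⟨i, h⟩ := dif_neg h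
      rw [hmerge]
      have hiA : i ∉ A := fun hiA => h (hAH hiA)
      constructor
      · intro hle
        refine Or.inr ?_
        rw [hΓdef, mem_filter]
        exact ⟨mem_univ i, by rw [dif_neg h]; exact hle⟩
      · rintro (h1 | h2)
        · exact absurd h1 hiA
        · rw [hΓdef, mem_filter, dif_neg h] at h2
          exact h2.2
  have hpart : ∀ u : H0 → ℝ, G c q H0 (u, v)
      = ∑ A ∈ H0.powerset, Set.indicator (S A) (fun _ => fdpB c q H0 (A ∪ Γv)) u := by
    intro u
    set A0 : Finset (Fin d) :=
      univ.filter (fun i : Fin d => if h : i ∈ H0 then u ⟨i, h⟩ ≤ c else False) with hA0def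
    have hA0mem : ∀ i : Fin d, i ∈ A0 ↔ ∃ h : i ∈ H0, u ⟨i, h⟩ ≤ c := by
      intro i
      rw [hA0def, mem_filter]
      constructor
      · rintro ⟨-, hi⟩
        by_cases h : i ∈ H0
        · rw [dif_pos h] at hi; exact ⟨h, hi⟩
        · rw [dif_neg h] at hi; exact absurd hi not_false
      · rintro ⟨h, hle⟩
        exact ⟨mem_univ i, by rw [dif_pos h]; exact hle⟩
    have hA0 : A0 ∈ H0.powerset := by
      rw [mem_powerset]
      intro i hi
      obtain ⟨h, -⟩ := (hA0mem i).1 hi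
      exact h
    have hu : u ∈ S A0 := by
      intro j _
      simp only
      by_cases hj : (j : Fin d) ∈ A0
      · rw [if_pos hj]
        obtain ⟨h, hle⟩ := (hA0mem j).1 hj
        exact hle
      · rw [if_neg hj]
        simp only [Set.mem_compl_iff, Set.mem_Iic, not_le]
        by_contra hcon
        push_neg at hcon
        exact hj ((hA0mem j).2 ⟨j.2, hcon⟩)
    have huniq : ∀ A ∈ H0.powerset, A ≠ A0 → u ∉ S A := by
      intro A hA hne hu'
      apply hne
      have hAH : A ⊆ H0 := mem_powerset.1 hA
      ext i
      rw [hA0mem i]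
      constructor
      · intro hiA
        have h : i ∈ H0 := hAH hiA
        have := hu' ⟨i, h⟩ (Set.mem_univ _)
        simp only [if_pos hiA] at this
        exact ⟨h, this⟩
      · rintro ⟨h, hle⟩
        by_contra hiA
        have := hu' ⟨i, h⟩ (Set.mem_univ _)
        simp only [if_neg hiA, Set.mem_compl_iff, Set.mem_Iic, not_le] at this
        linarith
    rw [Finset.sum_eq_single A0]
    · rw [Set.indicator_of_mem hu]
      unfold G
      rw [hbits A0 hA0 u hu]
    · intro A hA hne
      exact Set.indicator_of_notMem (huniq A hA hne) _
    · intro h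
      exact absurd hA0 h
  have hcalc : ∫ u, G c q H0 (u, v) ∂(Measure.pi fun _ : H0 => ν)
      = ∑ A ∈ H0.powerset, ((Measure.pi fun _ : H0 => ν) (S A)).toReal
          * fdpB c q H0 (A ∪ Γv) := by
    have h1 : (fun u : H0 → ℝ => G c q H0 (u, v))
        = fun u => ∑ A ∈ H0.powerset, Set.indicator (S A) (fun _ => fdpB c q H0 (A ∪ Γv)) u :=
      funext hpart
    rw [h1, integral_finset_sum]
    · apply Finset.sum_congr rfl
      intro A _
      rw [integral_indicator_const _ (hSmeas A), smul_eq_mul]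
      rfl
    · intro A _
      exact (integrable_const _).indicator (hSmeas A)
  rw [hcalc]
  have hw : ∀ A ∈ H0.powerset, ((Measure.pi fun _ : H0 => ν) (S A)).toReal
      = ρ ^ A.card * (1 - ρ) ^ (H0.card - A.card) := by
    intro A hA
    have hAH : A ⊆ H0 := mem_powerset.1 hA
    rw [hSdef]
    rw [Measure.pi_pi]
    rw [ENNReal.toReal_prod]
    have hfac : ∀ i : H0, (ν (if (i : Fin d) ∈ A then Set.Iic c else (Set.Iic c)ᶜ)).toReal
        = if (i : Fin d) ∈ A then ρ else (1 - ρ) := by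
      intro i
      split_ifs
      · rfl
      · rw [prob_compl_eq_one_sub measurableSet_Iic,
          ENNReal.toReal_sub_of_le prob_le_one ENNReal.one_ne_top, ENNReal.toReal_one]
    rw [Finset.prod_congr rfl (fun i _ => hfac i), Finset.prod_ite (fun _ => ρ) (fun _ => 1 - ρ),
      Finset.prod_const, Finset.prod_const]
    have hcard1 : (univ.filter (fun i : H0 => (i : Fin d) ∈ A)).card = A.card := by
      apply Finset.card_bij (fun (x : H0) _ => (x : Fin d))
      · intro x hx
        exact (mem_filter.1 hx).2
      · intro x _ y _ hxy
        exact Subtype.ext hxy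
      · intro b hb
        exact ⟨⟨b, hAH hb⟩, mem_filter.2 ⟨mem_univ _, hb⟩, rfl⟩
    have hcard2 : (univ.filter (fun i : H0 => ¬ (i : Fin d) ∈ A)).card = H0.card - A.card := by
      have h := card_filter_add_card_filter_not
        (s := (univ : Finset H0)) (p := fun i : H0 => (i : Fin d) ∈ A)
      rw [card_univ, Fintype.card_coe, hcard1] at h
      omega
    rw [hcard1, hcard2]
  rw [Finset.sum_congr rfl (fun A hA => by rw [hw A hA])]
  exact finite_fdr c q ρ hc0 hc1 hq0 hρ0 hρc H0 Γv hΓ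

end SeqStepAux


open SeqStepAux in
/-- Selective SeqStep+ FDR control (Barber–Candès): if the null p-values are i.i.d. with
common law `ν` satisfying `ν(-∞, t] ≤ t`, independent of the non-null p-values, then the
procedure selecting `S = {i ≤ k̂ : pᵢ ≤ c}` controls the FDR at level `q`. -/
theorem selective_seqstep_fdr_control
    {Ω : Type*} [MeasurableSpace Ω] (P : Measure Ω) [IsProbabilityMeasure P]
    {d : ℕ} (c q : ℝ) (hc0 : 0 < c) (hc1 : c < 1) (hq0 : 0 < q) (hq1 : q < 1)
    (p : Ω → Fin d → ℝ) (hp : Measurable p)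
    (hrange : ∀ ω, ∀ i, p ω i ∈ Set.Icc (0 : ℝ) 1)
    (H0 : Finset (Fin d))
    (ν : Measure ℝ) [IsProbabilityMeasure ν]
    (hν : ∀ t : ℝ, ν (Set.Iic t) ≤ ENNReal.ofReal t)
    (hindep : Measure.map (fun ω =>
        ((fun i : H0 => p ω i), (fun i : {i : Fin d // i ∉ H0} => p ω i))) P
      = (Measure.pi fun _ : H0 => ν).prod
          (Measure.map (fun ω => fun i : {i : Fin d // i ∉ H0} => p ω i) P)) :
    ∫ ω, ((seqStepSel c q (p ω) ∩ (H0 : Set (Fin d))).ncard : ℝ)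
        / max ((seqStepSel c q (p ω)).ncard : ℝ) 1 ∂P ≤ q := by
  classical
  have hm1 : Measurable (fun ω => (fun i : H0 => p ω i)) :=
    measurable_pi_lambda _ (fun i => (measurable_pi_apply _).comp hp)
  have hm2 : Measurable (fun ω => (fun i : {i : Fin d // i ∉ H0} => p ω i)) :=
    measurable_pi_lambda _ (fun i => (measurable_pi_apply _).comp hp)
  have hpm : Measurable (fun ω =>
      ((fun i : H0 => p ω i), (fun i : {i : Fin d // i ∉ H0} => p ω i))) :=
    hm1.prodMk hm2
  have hGmeas := measurable_G (d := d) c q H0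
  have hpoint : (fun ω => ((seqStepSel c q (p ω) ∩ (H0 : Set (Fin d))).ncard : ℝ)
      / max ((seqStepSel c q (p ω)).ncard : ℝ) 1)
      = fun ω => G c q H0
          ((fun i : H0 => p ω i), (fun i : {i : Fin d // i ∉ H0} => p ω i)) := by
    funext ω
    rw [integrand_eq c q H0 (p ω)]
    unfold G
    rw [show merge H0 (fun i : H0 => p ω i) (fun i : {i : Fin d // i ∉ H0} => p ω i) = p ω
      from merge_eq H0 (p ω)]
  rw [hpoint]
  haveI : IsProbabilityMeasure
      (Measure.map (fun ω => fun i : {i : Fin d // i ∉ H0} => p ω i) P) :=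
    Measure.isProbabilityMeasure_map hm2.aemeasurable
  have hInt : Integrable (G c q H0)
      ((Measure.pi fun _ : H0 => ν).prod
        (Measure.map (fun ω => fun i : {i : Fin d // i ∉ H0} => p ω i) P)) := by
    refine ⟨hGmeas.aestronglyMeasurable, ?_⟩
    apply HasFiniteIntegral.of_bounded (C := 1)
    apply ae_of_all
    intro z
    rw [Real.norm_eq_abs]
    unfold G
    rw [abs_of_nonneg (fdpB_nonneg _ _ _ _)]
    exact fdpB_le_one _ _ _ _
  calc ∫ ω, G c q H0
        ((fun i : H0 => p ω i), (fun i : {i : Fin d // i ∉ H0} => p ω i)) ∂P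
      = ∫ z, G c q H0 z ∂(Measure.map (fun ω =>
          ((fun i : H0 => p ω i), (fun i : {i : Fin d // i ∉ H0} => p ω i))) P) :=
        (integral_map hpm.aemeasurable hGmeas.aestronglyMeasurable).symm
    _ = ∫ z, G c q H0 z ∂((Measure.pi fun _ : H0 => ν).prod
          (Measure.map (fun ω => fun i : {i : Fin d // i ∉ H0} => p ω i) P)) := by
        rw [hindep]
    _ = ∫ y, ∫ x, G c q H0 (x, y) ∂(Measure.pi fun _ : H0 => ν)
          ∂(Measure.map (fun ω => fun i : {i : Fin d // i ∉ H0} => p ω i) P) :=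
        MeasureTheory.integral_prod_symm _ hInt
    _ ≤ ∫ _, q ∂(Measure.map (fun ω => fun i : {i : Fin d // i ∉ H0} => p ω i) P) := by
        apply integral_mono hInt.integral_prod_right (integrable_const q)
        intro y
        exact inner_le c q hc0 hc1 hq0 H0 ν (hν c) y
    _ = q := by simp
end

section
/- Let D be a positive definite d×d diagonal matrix and Σ a positive definite d×d matrix, and let κ ≥ 1. Then ((κ+1)/κ)·C − D is positive definite, where C = 2D − DΣ^{-1}D, if and only if ((κ+2)/(κ+1))·Σ − D is positive definite. -/
open Matrix

section Aux

variable {m n : Type*} [Fintype m] [Fintype n]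

lemma posDef_smul_of {M : Matrix n n ℝ} (hM : M.PosDef) {r : ℝ} (hr : 0 < r) :
    (r • M).PosDef := by
  refine PosDef.of_dotProduct_mulVec_pos ?_ (fun x hx => ?_)
  · rw [IsHermitian, conjTranspose_smul, hM.1, star_trivial]
  · rw [smul_mulVec, dotProduct_smul, smul_eq_mul]
    exact mul_pos hr (hM.dotProduct_mulVec_pos hx)

lemma posDef_smul_iff {M : Matrix n n ℝ} {r : ℝ} (hr : 0 < r) :
    (r • M).PosDef ↔ M.PosDef := by
  refine ⟨fun h => ?_, fun h => posDef_smul_of h hr⟩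
  have := posDef_smul_of h (inv_pos.mpr hr)
  rwa [smul_smul, inv_mul_cancel₀ hr.ne', one_smul] at this

lemma posDef_fromBlocks₁₁ [DecidableEq m] {A : Matrix m m ℝ} (B : Matrix m n ℝ)
    (D : Matrix n n ℝ) (hA : A.PosDef) [Invertible A] :
    (fromBlocks A B Bᴴ D).PosDef ↔ (D - Bᴴ * A⁻¹ * B).PosDef := by
  constructor
  · refine fun h => PosDef.of_dotProduct_mulVec_pos ((IsHermitian.fromBlocks₁₁ _ _ hA.1).mp h.1) (fun x hx => ?_)
    have hv : (Sum.elim (-((A⁻¹ * B) *ᵥ x)) x : m ⊕ n → ℝ) ≠ 0 := by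
      intro h0
      exact hx (funext fun i => congrFun h0 (Sum.inr i))
    have := h.dotProduct_mulVec_pos hv
    rw [dotProduct_mulVec, schur_complement_eq₁₁ B D _ _ hA.1, neg_add_cancel,
      dotProduct_zero, zero_add] at this
    rwa [dotProduct_mulVec]
  · refine fun h => PosDef.of_dotProduct_mulVec_pos ((IsHermitian.fromBlocks₁₁ _ _ hA.1).mpr h.1) (fun v hv => ?_)
    rw [dotProduct_mulVec, ← Sum.elim_comp_inl_inr v, schur_complement_eq₁₁ B D _ _ hA.1]
    by_cases hy : v ∘ Sum.inr = 0
    · have hx : v ∘ Sum.inl ≠ 0 := by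
        intro h0
        apply hv
        funext i
        cases i with
        | inl i => exact congrFun h0 i
        | inr i => exact congrFun hy i
      rw [hy]
      simp only [mulVec_zero, add_zero, dotProduct_zero]
      calc (0:ℝ) < star (v ∘ Sum.inl) ⬝ᵥ A *ᵥ (v ∘ Sum.inl) := hA.dotProduct_mulVec_pos hx
        _ = _ := by rw [dotProduct_mulVec]
    · have h1 : (0:ℝ) ≤ star (v ∘ Sum.inl + (A⁻¹ * B) *ᵥ (v ∘ Sum.inr)) ᵥ*
          A ⬝ᵥ (v ∘ Sum.inl + (A⁻¹ * B) *ᵥ (v ∘ Sum.inr)) := by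
        rw [← dotProduct_mulVec]
        exact hA.posSemidef.dotProduct_mulVec_nonneg _
      have h2 : (0:ℝ) < star (v ∘ Sum.inr) ᵥ* (D - Bᴴ * A⁻¹ * B) ⬝ᵥ (v ∘ Sum.inr) := by
        rw [← dotProduct_mulVec]
        exact h.dotProduct_mulVec_pos hy
      linarith

lemma posDef_fromBlocks₂₂ [DecidableEq n] (A : Matrix m m ℝ) (B : Matrix m n ℝ)
    {D : Matrix n n ℝ} (hD : D.PosDef) [Invertible D] :
    (fromBlocks A B Bᴴ D).PosDef ↔ (A - B * D⁻¹ * Bᴴ).PosDef := by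
  constructor
  · refine fun h => PosDef.of_dotProduct_mulVec_pos ((IsHermitian.fromBlocks₂₂ _ _ hD.1).mp h.1) (fun x hx => ?_)
    have hv : (Sum.elim x (-((D⁻¹ * Bᴴ) *ᵥ x)) : m ⊕ n → ℝ) ≠ 0 := by
      intro h0
      exact hx (funext fun i => congrFun h0 (Sum.inl i))
    have := h.dotProduct_mulVec_pos hv
    rw [dotProduct_mulVec, schur_complement_eq₂₂ A B _ _ hD.1, add_neg_cancel,
      dotProduct_zero, zero_add] at this
    rwa [dotProduct_mulVec]
  · refine fun h => PosDef.of_dotProduct_mulVec_pos ((IsHermitian.fromBlocks₂₂ _ _ hD.1).mpr h.1) (fun v hv => ?_)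
    rw [dotProduct_mulVec, ← Sum.elim_comp_inl_inr v, schur_complement_eq₂₂ A B _ _ hD.1]
    by_cases hx : v ∘ Sum.inl = 0
    · have hy : v ∘ Sum.inr ≠ 0 := by
        intro h0
        apply hv
        funext i
        cases i with
        | inl i => exact congrFun hx i
        | inr i => exact congrFun h0 i
      rw [hx]
      simp only [mulVec_zero, zero_add, dotProduct_zero]
      calc (0:ℝ) < star (v ∘ Sum.inr) ⬝ᵥ D *ᵥ (v ∘ Sum.inr) := hD.dotProduct_mulVec_pos hy
        _ = _ := by rw [dotProduct_mulVec, add_zero]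
    · have h1 : (0:ℝ) ≤ star ((D⁻¹ * Bᴴ) *ᵥ (v ∘ Sum.inl) + v ∘ Sum.inr) ᵥ*
          D ⬝ᵥ ((D⁻¹ * Bᴴ) *ᵥ (v ∘ Sum.inl) + v ∘ Sum.inr) := by
        rw [← dotProduct_mulVec]
        exact hD.posSemidef.dotProduct_mulVec_nonneg _
      have h2 : (0:ℝ) < star (v ∘ Sum.inl) ᵥ* (A - B * D⁻¹ * Bᴴ) ⬝ᵥ (v ∘ Sum.inl) := by
        rw [← dotProduct_mulVec]
        exact h.dotProduct_mulVec_pos hx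
      linarith

end Aux

/-- Key inductive step for the positive definiteness of the multi-knockoff covariance:
with `C = 2D - D Σ⁻¹ D`, the matrix `((κ+1)/κ) • C - D` is positive definite iff
`((κ+2)/(κ+1)) • Σ - D` is positive definite. -/
theorem posDef_step {d : ℕ} (κ : ℕ) (hκ : 1 ≤ κ)
    (S : Matrix (Fin d) (Fin d) ℝ) (s : Fin d → ℝ)
    (hS : S.PosDef) (hD : (Matrix.diagonal s).PosDef) :
    ((((κ : ℝ) + 1) / κ) • ((2 : ℝ) • Matrix.diagonal s
        - Matrix.diagonal s * S⁻¹ * Matrix.diagonal s)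
      - Matrix.diagonal s).PosDef
    ↔ ((((κ : ℝ) + 2) / ((κ : ℝ) + 1)) • S - Matrix.diagonal s).PosDef := by
  have hκ0 : (0:ℝ) < κ := by exact_mod_cast hκ
  have hκ1 : (0:ℝ) < (κ:ℝ) + 1 := by linarith
  set D : Matrix (Fin d) (Fin d) ℝ := Matrix.diagonal s with hDdef
  set a : ℝ := ((κ:ℝ) + 1) / κ with ha
  set c : ℝ := ((κ:ℝ) + 2) / ((κ:ℝ) + 1) with hc
  have hapos : 0 < a := div_pos hκ1 hκ0
  have hcpos : 0 < c := div_pos (by linarith) hκ1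
  have hcS : (c • S).PosDef := posDef_smul_of hS hcpos
  have hDH : Dᴴ = D := hD.1
  letI : Invertible (c • S) := hcS.isUnit.invertible
  letI : Invertible D := hD.isUnit.invertible
  -- the two Schur complements of the same block matrix
  have h11 := posDef_fromBlocks₁₁ (A := c • S) D D hcS
  have h22 := posDef_fromBlocks₂₂ (c • S) D (D := D) hD
  rw [hDH] at h11 h22
  have hDD : D * D⁻¹ * D = D := by
    rw [Matrix.mul_inv_of_invertible, one_mul]
  letI : Invertible c := invertibleOfNonzero hcpos.ne'
  have hcSinv : (c • S)⁻¹ = c⁻¹ • S⁻¹ := by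
    rw [Matrix.inv_smul c (A := S) (isUnit_iff_ne_zero.mpr hS.det_pos.ne'), invOf_eq_inv]
  have hE : a • ((2:ℝ) • D - D * S⁻¹ * D) - D
      = (a * c) • (D - D * (c • S)⁻¹ * D) := by
    rw [hcSinv, Matrix.mul_smul, Matrix.smul_mul]
    match_scalars
    · rw [ha, hc]; field_simp; ring
    · rw [ha, hc]; field_simp
  calc (a • ((2:ℝ) • D - D * S⁻¹ * D) - D).PosDef
      ↔ (D - D * (c • S)⁻¹ * D).PosDef := by
        rw [hE]; exact posDef_smul_iff (mul_pos hapos hcpos)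
    _ ↔ (fromBlocks (c • S) D D D).PosDef := h11.symm
    _ ↔ (c • S - D * D⁻¹ * D).PosDef := h22
    _ ↔ (c • S - D).PosDef := by rw [hDD]
end
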